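/- arXiv:1801.03078 — 3 statements merged into one kernel-verified Lean document; each statement's English description precedes it below -/
import Mathlib

section
/- Let G be a finitely generated, residually finite group such that the function rk − 1 is multiplicative on G, i.e. for every pair of subgroups G₂ ≤ G₁ of G with G₂ of finite index in G one has rk(G₂) − 1 = [G₁ : G₂] · (rk(G₁) − 1). Then G is a free group. -/
/-- The rank of a subgroup `H` of `G`: the minimal cardinality of a subset of `G`
generating `H`. -/
noncomputable def subgroupRank {G : Type*} [Group G] (H : Subgroup G) : ℕ :=
  sInf {n : ℕ | ∃ S : Finset G, S.card = n ∧ Subgroup.closure (S : Set G) = H}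

open Subgroup

namespace RkFree

variable {G : Type*} [Group G] {T : Type*}

/-- Evaluation of a word (list of letters with signs) in `G` via `f`. -/
def wrd (f : T → G) (L : List (T × Bool)) : G :=
  (L.map fun x => cond x.2 (f x.1) (f x.1)⁻¹).prod

@[simp] lemma wrd_nil (f : T → G) : wrd f [] = 1 := rfl

lemma wrd_append (f : T → G) (L₁ L₂ : List (T × Bool)) :
    wrd f (L₁ ++ L₂) = wrd f L₁ * wrd f L₂ := by
  simp [wrd]

@[simp] lemma wrd_singleton (f : T → G) (x : T × Bool) :
    wrd f [x] = cond x.2 (f x.1) (f x.1)⁻¹ := by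
  simp [wrd]

lemma lift_mk_eq_wrd (f : T → G) (L : List (T × Bool)) :
    FreeGroup.lift f (FreeGroup.mk L) = wrd f L :=
  FreeGroup.lift_mk

lemma exists_wrd (f : T → G) (hf : closure (Set.range f) = ⊤) (x : G) :
    ∃ L : List (T × Bool), wrd f L = x := by
  classical
  have hx : x ∈ (FreeGroup.lift f).range := by
    rw [FreeGroup.range_lift_eq_closure, hf]; trivial
  obtain ⟨u, hu⟩ := hx
  exact ⟨u.toWord, by rw [← lift_mk_eq_wrd, FreeGroup.mk_toWord]; exact hu⟩

variable (H : Subgroup G) (f : T → G)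

/-- word-length norm on the quotient. -/
noncomputable def qn (q : G ⧸ H) : ℕ :=
  sInf {k | ∃ L : List (T × Bool), L.length = k ∧ ((wrd f L : G) : G ⧸ H) = q}

lemma qn_nonempty (hf : closure (Set.range f) = ⊤) (q : G ⧸ H) :
    {k | ∃ L : List (T × Bool), L.length = k ∧ ((wrd f L : G) : G ⧸ H) = q}.Nonempty := by
  obtain ⟨x, rfl⟩ := QuotientGroup.mk_surjective q
  obtain ⟨L, hL⟩ := exists_wrd f hf x
  exact ⟨L.length, L, rfl, by rw [hL]⟩

lemma qn_spec (hf : closure (Set.range f) = ⊤) (q : G ⧸ H) :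
    ∃ L : List (T × Bool), L.length = qn H f q ∧ ((wrd f L : G) : G ⧸ H) = q := by
  have := Nat.sInf_mem (qn_nonempty H f hf q)
  obtain ⟨L, h1, h2⟩ := this
  exact ⟨L, h1, h2⟩

lemma qn_le {q : G ⧸ H} {L : List (T × Bool)} (h : ((wrd f L : G) : G ⧸ H) = q) :
    qn H f q ≤ L.length :=
  Nat.sInf_le ⟨L, rfl, h⟩

variable [H.Normal]

lemma qn_one : qn H f (1 : G ⧸ H) = 0 :=
  Nat.le_zero.mp (qn_le H f (L := []) (by simp))

lemma qn_eq_zero (hf : closure (Set.range f) = ⊤) {q : G ⧸ H} (h : qn H f q = 0) : q = 1 := by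
  obtain ⟨L, h1, h2⟩ := qn_spec H f hf q
  rw [h] at h1
  rw [List.length_eq_zero_iff] at h1
  subst h1
  simp at h2
  exact h2.symm

lemma exists_parent (hf : closure (Set.range f) = ⊤) (q : G ⧸ H) (hq : q ≠ 1) :
    ∃ ptb : (G ⧸ H) × (T × Bool),
      qn H f ptb.1 < qn H f q ∧
      ptb.1 * ((cond ptb.2.2 (f ptb.2.1) (f ptb.2.1)⁻¹ : G) : G ⧸ H) = q := by
  obtain ⟨L, hlen, hLq⟩ := qn_spec H f hf q
  have hLne : L ≠ [] := by
    rintro rfl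
    exact hq (by simpa using hLq.symm)
  set x := L.getLast hLne with hx
  have hsplit : L = L.dropLast ++ [x] := (List.dropLast_append_getLast hLne).symm
  refine ⟨(((wrd f L.dropLast : G) : G ⧸ H), x), ?_, ?_⟩
  · show qn H f ((wrd f L.dropLast : G) : G ⧸ H) < qn H f q
    have h1 : qn H f ((wrd f L.dropLast : G) : G ⧸ H) ≤ L.dropLast.length :=
      qn_le H f rfl
    have h2 : L.dropLast.length < L.length := by
      conv_rhs => rw [hsplit]
      simp
    have h3 : qn H f q = L.length := hlen.symm
    omega
  · show ((wrd f L.dropLast : G) : G ⧸ H) * _ = q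
    rw [← QuotientGroup.mk_mul, ← wrd_singleton f x, ← wrd_append, ← hsplit, hLq]

variable [Inhabited T]

open scoped Classical in
/-- parent data for the spanning tree. -/
noncomputable def pdat (hf : closure (Set.range f) = ⊤) (q : G ⧸ H) : (G ⧸ H) × (T × Bool) :=
  if hq : q = 1 then (1, (default, true)) else (exists_parent H f hf q hq).choose

lemma pdat_lt (hf : closure (Set.range f) = ⊤) {q : G ⧸ H} (hq : q ≠ 1) :
    qn H f (pdat H f hf q).1 < qn H f q := by
  rw [pdat, dif_neg hq]
  exact (exists_parent H f hf q hq).choose_spec.1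

lemma pdat_mul (hf : closure (Set.range f) = ⊤) {q : G ⧸ H} (hq : q ≠ 1) :
    (pdat H f hf q).1 *
      ((cond (pdat H f hf q).2.2 (f (pdat H f hf q).2.1) (f (pdat H f hf q).2.1)⁻¹ : G) : G ⧸ H)
      = q := by
  rw [pdat, dif_neg hq]
  exact (exists_parent H f hf q hq).choose_spec.2

open scoped Classical in
/-- The Schreier transversal representative. -/
noncomputable def RR (hf : closure (Set.range f) = ⊤) (q : G ⧸ H) : G :=
  if hq : q = 1 then 1
  else RR hf (pdat H f hf q).1 *
    cond (pdat H f hf q).2.2 (f (pdat H f hf q).2.1) (f (pdat H f hf q).2.1)⁻¹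
termination_by qn H f q
decreasing_by exact pdat_lt H f hf hq

lemma RR_one (hf : closure (Set.range f) = ⊤) : RR H f hf (1 : G ⧸ H) = 1 := by
  rw [RR]; simp

lemma RR_eq (hf : closure (Set.range f) = ⊤) {q : G ⧸ H} (hq : q ≠ 1) :
    RR H f hf q = RR H f hf (pdat H f hf q).1 *
      cond (pdat H f hf q).2.2 (f (pdat H f hf q).2.1) (f (pdat H f hf q).2.1)⁻¹ := by
  rw [RR, dif_neg hq]

lemma RR_mk (hf : closure (Set.range f) = ⊤) (q : G ⧸ H) :
    ((RR H f hf q : G) : G ⧸ H) = q := by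
  have key : ∀ n (q : G ⧸ H), qn H f q < n → ((RR H f hf q : G) : G ⧸ H) = q := by
    intro n
    induction n with
    | zero => intro q h; omega
    | succ n ih =>
      intro q h
      by_cases hq : q = 1
      · subst hq; rw [RR_one]; simp
      · rw [RR_eq H f hf hq, QuotientGroup.mk_mul,
          ih _ (by have := pdat_lt H f hf hq; omega)]
        exact pdat_mul H f hf hq
  exact key (qn H f q + 1) q (Nat.lt_succ_self _)

/-- Schreier generator attached to a pair (coset, letter). -/
noncomputable def sgen (hf : closure (Set.range f) = ⊤) (p : (G ⧸ H) × T) : G :=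
  RR H f hf p.1 * f p.2 * (RR H f hf (p.1 * ((f p.2 : G) : G ⧸ H)))⁻¹

lemma sgen_mem (hf : closure (Set.range f) = ⊤) (p : (G ⧸ H) × T) :
    sgen H f hf p ∈ H := by
  rw [← QuotientGroup.eq_one_iff, sgen,
    QuotientGroup.mk_mul, QuotientGroup.mk_mul, QuotientGroup.mk_inv, RR_mk, RR_mk]
  group

/-- The tree edge associated to a non-identity coset. -/
noncomputable def treeEdge (hf : closure (Set.range f) = ⊤) (q : G ⧸ H) : (G ⧸ H) × T :=
  cond (pdat H f hf q).2.2 ((pdat H f hf q).1, (pdat H f hf q).2.1) (q, (pdat H f hf q).2.1)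

lemma sgen_treeEdge (hf : closure (Set.range f) = ⊤) {q : G ⧸ H} (hq : q ≠ 1) :
    sgen H f hf (treeEdge H f hf q) = 1 := by
  have hmul := pdat_mul H f hf hq
  have hRR := RR_eq H f hf hq
  obtain ⟨⟨p, t, b⟩, hpd⟩ : ∃ x, pdat H f hf q = x := ⟨_, rfl⟩
  rw [hpd] at hmul hRR
  simp only at hmul hRR
  rw [treeEdge, hpd]
  simp only
  cases b
  · simp only [cond_false] at hmul hRR ⊢
    have hq' : q * ((f t : G) : G ⧸ H) = p := by
      rw [← hmul, QuotientGroup.mk_inv]; group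
    rw [sgen]
    simp only
    rw [hq', hRR]
    group
  · simp only [cond_true] at hmul hRR ⊢
    rw [sgen]
    simp only
    rw [hmul, hRR]
    group

lemma treeEdge_inj (hf : closure (Set.range f) = ⊤) {q₁ q₂ : G ⧸ H}
    (h1 : q₁ ≠ 1) (h2 : q₂ ≠ 1) (h : treeEdge H f hf q₁ = treeEdge H f hf q₂) :
    q₁ = q₂ := by
  have hm1 := pdat_mul H f hf h1
  have hm2 := pdat_mul H f hf h2
  have hl1 := pdat_lt H f hf h1
  have hl2 := pdat_lt H f hf h2
  obtain ⟨⟨p₁, t₁, b₁⟩, hpd1⟩ : ∃ x, pdat H f hf q₁ = x := ⟨_, rfl⟩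
  obtain ⟨⟨p₂, t₂, b₂⟩, hpd2⟩ : ∃ x, pdat H f hf q₂ = x := ⟨_, rfl⟩
  rw [hpd1] at hm1 hl1
  rw [hpd2] at hm2 hl2
  rw [treeEdge, treeEdge, hpd1, hpd2] at h
  simp only at hm1 hm2 hl1 hl2 h
  cases b₁ <;> cases b₂ <;>
    simp only [cond_false, cond_true, Prod.mk.injEq] at hm1 hm2 h
  · exact h.1
  · -- b₁ = false, b₂ = true : q₁ = p₂, t₁ = t₂
    exfalso
    obtain ⟨hfst, hsnd⟩ := h
    subst hsnd
    have hp1 : p₁ = q₁ * ((f t₁ : G) : G ⧸ H) := by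
      rw [← hm1, QuotientGroup.mk_inv]; group
    rw [hfst] at hp1
    rw [hm2] at hp1
    rw [hp1] at hl1
    rw [← hfst] at hl2
    omega
  · -- b₁ = true, b₂ = false : p₁ = q₂, t₁ = t₂
    exfalso
    obtain ⟨hfst, hsnd⟩ := h
    subst hsnd
    have hp2 : p₂ = q₂ * ((f t₁ : G) : G ⧸ H) := by
      rw [← hm2, QuotientGroup.mk_inv]; group
    rw [← hfst] at hp2
    rw [hm1] at hp2
    rw [hp2] at hl2
    rw [hfst] at hl1
    omega
  · obtain ⟨hfst, hsnd⟩ := h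
    rw [← hm1, ← hm2, hfst, hsnd]

lemma treeEdge_cases (hf : closure (Set.range f) = ⊤) {q : G ⧸ H} (hq : q ≠ 1) :
    ((treeEdge H f hf q).1 * ((f (treeEdge H f hf q).2 : G) : G ⧸ H) = q ∧
      qn H f (treeEdge H f hf q).1 < qn H f q) ∨
    ((treeEdge H f hf q).1 = q ∧
      qn H f ((treeEdge H f hf q).1 * ((f (treeEdge H f hf q).2 : G) : G ⧸ H)) < qn H f q) := by
  have hmul := pdat_mul H f hf hq
  have hlt := pdat_lt H f hf hq
  obtain ⟨⟨p, t, b⟩, hpd⟩ : ∃ x, pdat H f hf q = x := ⟨_, rfl⟩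
  rw [hpd] at hmul hlt
  rw [treeEdge, hpd]
  simp only at hmul hlt ⊢
  cases b
  · simp only [cond_false] at hmul ⊢
    right
    refine ⟨by simp, ?_⟩
    have hq' : q * ((f t : G) : G ⧸ H) = p := by
      rw [← hmul, QuotientGroup.mk_inv]; group
    rw [hq']
    exact hlt
  · simp only [cond_true] at hmul ⊢
    exact Or.inl ⟨hmul, hlt⟩

/-- vertex along the path of a word. -/
def vtx (L : List (T × Bool)) (k : ℕ) : G ⧸ H := ((wrd f (L.take k) : G) : G ⧸ H)

/-- letter at position i. -/
def lett (L : List (T × Bool)) (i : ℕ) : T × Bool := L.getD i default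

/-- edge crossed at step i. -/
def edg (L : List (T × Bool)) (i : ℕ) : (G ⧸ H) × T :=
  cond (lett L i).2 (vtx H f L i, (lett L i).1) (vtx H f L (i + 1), (lett L i).1)

/-- signed Schreier generator at step i. -/
noncomputable def sg (hf : closure (Set.range f) = ⊤) (L : List (T × Bool)) (i : ℕ) : G :=
  cond (lett L i).2 (sgen H f hf (edg H f L i)) (sgen H f hf (edg H f L i))⁻¹

lemma vtx_zero (L : List (T × Bool)) : vtx H f L 0 = 1 := by
  simp [vtx]

lemma wrd_take_succ (L : List (T × Bool)) {i : ℕ} (hi : i < L.length) :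
    wrd f (L.take (i + 1)) =
      wrd f (L.take i) * cond (lett L i).2 (f (lett L i).1) (f (lett L i).1)⁻¹ := by
  rw [List.take_succ, wrd_append]
  congr 1
  have : L[i]?.toList = [L[i]] := by
    rw [List.getElem?_eq_getElem hi]; rfl
  rw [this, wrd_singleton, lett, List.getD_eq_getElem L default hi]

lemma vtx_succ (L : List (T × Bool)) {i : ℕ} (hi : i < L.length) :
    vtx H f L (i + 1) =
      vtx H f L i * ((cond (lett L i).2 (f (lett L i).1) (f (lett L i).1)⁻¹ : G) : G ⧸ H) := by
  rw [vtx, wrd_take_succ f L hi, QuotientGroup.mk_mul]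
  rfl

lemma vtx_succ_true (L : List (T × Bool)) {i : ℕ} (hi : i < L.length)
    (hb : (lett L i).2 = true) :
    vtx H f L (i + 1) = vtx H f L i * ((f (lett L i).1 : G) : G ⧸ H) := by
  rw [vtx_succ H f L hi, hb]
  simp

lemma vtx_succ_false (L : List (T × Bool)) {i : ℕ} (hi : i < L.length)
    (hb : (lett L i).2 = false) :
    vtx H f L i = vtx H f L (i + 1) * ((f (lett L i).1 : G) : G ⧸ H) := by
  rw [vtx_succ H f L hi, hb]
  simp only [cond_false, QuotientGroup.mk_inv]
  group

lemma edg_spec (L : List (T × Bool)) {i : ℕ} (hi : i < L.length) :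
    ((edg H f L i).1 = vtx H f L i ∧
      (edg H f L i).1 * ((f (edg H f L i).2 : G) : G ⧸ H) = vtx H f L (i + 1)) ∨
    ((edg H f L i).1 = vtx H f L (i + 1) ∧
      (edg H f L i).1 * ((f (edg H f L i).2 : G) : G ⧸ H) = vtx H f L i) := by
  rcases hb : (lett L i).2 with _ | _
  · right
    rw [edg, hb]
    exact ⟨rfl, (vtx_succ_false H f L hi hb).symm⟩
  · left
    rw [edg, hb]
    exact ⟨rfl, (vtx_succ_true H f L hi hb).symm⟩

lemma telescope (hf : closure (Set.range f) = ⊤) (L : List (T × Bool)) :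
    ∀ k, k ≤ L.length →
      ((List.range k).map (sg H f hf L)).prod
        = wrd f (L.take k) * (RR H f hf (vtx H f L k))⁻¹
  | 0, _ => by
    simp [vtx_zero, RR_one]
  | (k + 1), hk => by
    have hklt : k < L.length := hk
    rw [List.range_succ, List.map_append, List.prod_append,
      telescope hf L k (le_of_lt hklt)]
    simp only [List.map_singleton, List.prod_singleton]
    rw [wrd_take_succ f L hklt]
    rcases hb : (lett L k).2 with _ | _
    · -- backward letter
      have hv := vtx_succ_false H f L hklt hb
      rw [sg, hb]
      simp only [cond_false]
      rw [edg, hb]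
      simp only [cond_false]
      rw [sgen]
      simp only
      rw [← hv]
      group
    · -- forward letter
      have hv := vtx_succ_true H f L hklt hb
      rw [sg, hb]
      simp only [cond_true]
      rw [edg, hb]
      simp only [cond_true]
      rw [sgen]
      simp only
      rw [← hv]
      group

end RkFree


open Subgroup RkFree in
/-- A finitely generated, residually finite group on which the function `rk - 1` is
multiplicative is free. -/
theorem free_of_rank_sub_one_multiplicative (G : Type*) [Group G] [Group.FG G]
    (hres : ∀ g : G, g ≠ 1 → ∃ N : Subgroup G, N.Normal ∧ N.FiniteIndex ∧ g ∉ N)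
    (hmult : ∀ G₁ G₂ : Subgroup G, G₂ ≤ G₁ → G₂.FiniteIndex →
      (subgroupRank G₂ : ℤ) - 1 = (Subgroup.relIndex G₂ G₁ : ℤ) * ((subgroupRank G₁ : ℤ) - 1)) :
    IsFreeGroup G := by
  classical
  -- a minimal generating set
  obtain ⟨S, hScard, hStop⟩ :
      ∃ S : Finset G, S.card = subgroupRank (⊤ : Subgroup G) ∧
        Subgroup.closure (S : Set G) = ⊤ := by
    have hne : {n : ℕ | ∃ S : Finset G, S.card = n ∧
        Subgroup.closure (S : Set G) = ⊤}.Nonempty := by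
      obtain ⟨S₀, hS₀⟩ := Group.fg_def.mp ‹Group.FG G›
      exact ⟨S₀.card, S₀, rfl, hS₀⟩
    exact Nat.sInf_mem hne
  set T := {x // x ∈ S} with hT
  set f : T → G := fun t => (t : G) with hfdef
  have hfr : Subgroup.closure (Set.range f) = ⊤ := by
    have : Set.range f = (S : Set G) := Subtype.range_val
    rw [this, hStop]
  by_cases hker : ∀ u : FreeGroup T, FreeGroup.lift f u = 1 → u = 1
  · -- the kernel is trivial, so G is free
    have hs : Function.Surjective (FreeGroup.lift f) := by
      intro x
      obtain ⟨L, hL⟩ := exists_wrd f hfr x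
      exact ⟨FreeGroup.mk L, (lift_mk_eq_wrd f L).trans hL⟩
    have hi : Function.Injective (FreeGroup.lift f) :=
      (injective_iff_map_eq_one _).mpr hker
    exact IsFreeGroup.ofMulEquiv (MulEquiv.ofBijective (FreeGroup.lift f) ⟨hi, hs⟩)
  · -- otherwise: derive a contradiction
    exfalso
    push_neg at hker
    -- a shortest nontrivial element of the kernel
    obtain ⟨ℓ, ⟨w, hw1, hwne, hwlen⟩, hmin⟩ :
        ∃ ℓ : ℕ, (∃ u : FreeGroup T, FreeGroup.lift f u = 1 ∧ u ≠ 1 ∧ u.toWord.length = ℓ) ∧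
          ∀ u : FreeGroup T, FreeGroup.lift f u = 1 → u ≠ 1 → ℓ ≤ u.toWord.length := by
      have hKSne : {k : ℕ | ∃ u : FreeGroup T,
          FreeGroup.lift f u = 1 ∧ u ≠ 1 ∧ u.toWord.length = k}.Nonempty := by
        obtain ⟨u, hu1, hu2⟩ := hker
        exact ⟨u.toWord.length, u, hu1, hu2, rfl⟩
      exact ⟨_, Nat.sInf_mem hKSne, fun u h1 h2 => Nat.sInf_le ⟨u, h1, h2, rfl⟩⟩
    set L := w.toWord with hLdef
    have hLlen : L.length = ℓ := hwlen
    have hLne : L ≠ [] := by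
      intro h
      exact hwne (FreeGroup.toWord_eq_nil_iff.mp h)
    have hlpos : 0 < ℓ := by
      rw [← hLlen]
      exact List.length_pos_iff.mpr hLne
    haveI : Inhabited T := ⟨(L.head hLne).1⟩
    have hwrdL : wrd f L = 1 := by
      rw [← lift_mk_eq_wrd, FreeGroup.mk_toWord, hw1]
    -- the subwords are nontrivial in G
    have heltne : ∀ i j, i < j → j < ℓ →
        (wrd f (L.take i))⁻¹ * wrd f (L.take j) ≠ 1 := by
      intro i j hij hjl hcon
      have hjlen : j ≤ L.length := by omega
      set M := (L.take j).drop i with hM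
      have hsplit : L.take i ++ M = L.take j := by
        have h1 : L.take i = (L.take j).take i := by
          rw [List.take_take]
          congr 1
          omega
        rw [hM, h1]
        exact List.take_append_drop i (L.take j)
      have hwM : wrd f M = 1 := by
        have h2 := wrd_append f (L.take i) M
        rw [hsplit] at h2
        have h3 : wrd f (L.take j) = wrd f (L.take i) := by
          have := mul_eq_one_iff_inv_eq.mp hcon
          rw [← this]
          simp
        rw [h3] at h2
        exact (mul_eq_left.mp h2.symm)
      have hMlen : M.length = j - i := by
        rw [hM, List.length_drop, List.length_take]
        omega
      by_cases hu : FreeGroup.mk M = 1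
      · have h1 : FreeGroup.mk (L.take j) = FreeGroup.mk (L.take i) := by
          rw [← hsplit, ← FreeGroup.mul_mk, hu, mul_one]
        have h2 : w = FreeGroup.mk (L.take i ++ L.drop j) := by
          have h0 : w = FreeGroup.mk L := FreeGroup.mk_toWord.symm
          rw [h0]
          conv_lhs => rw [← List.take_append_drop j L]
          rw [← FreeGroup.mul_mk, h1, FreeGroup.mul_mk]
        have h3 : FreeGroup.norm w ≤ (L.take i ++ L.drop j).length := by
          rw [h2]
          exact FreeGroup.norm_mk_le
        have h4 : FreeGroup.norm w = ℓ := hwlen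
        have h5 : (L.take i ++ L.drop j).length < ℓ := by
          rw [List.length_append, List.length_take, List.length_drop]
          omega
        omega
      · have h4 : FreeGroup.lift f (FreeGroup.mk M) = 1 := by
          rw [lift_mk_eq_wrd, hwM]
        have h5 := hmin _ h4 hu
        have h6 : (FreeGroup.mk M).toWord.length ≤ M.length := FreeGroup.norm_mk_le
        omega
    -- the residual-finiteness subgroup H
    obtain ⟨NN, hNN⟩ : ∃ NN : ℕ → ℕ → Subgroup G, ∀ i j, (NN i j).Normal ∧
        (NN i j).FiniteIndex ∧
        (i < j → j < ℓ → (wrd f (L.take i))⁻¹ * wrd f (L.take j) ∉ NN i j) := by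
      refine ⟨fun i j => if h : i < j ∧ j < ℓ
        then (hres _ (heltne i j h.1 h.2)).choose else ⊤, ?_⟩
      intro i j
      by_cases h : i < j ∧ j < ℓ
      · simp only [dif_pos h]
        obtain ⟨hn, hfi, hnm⟩ := (hres _ (heltne i j h.1 h.2)).choose_spec
        exact ⟨hn, hfi, fun _ _ => hnm⟩
      · simp only [dif_neg h]
        exact ⟨inferInstance, inferInstance, fun h1 h2 => absurd ⟨h1, h2⟩ h⟩
    set H : Subgroup G := ⨅ (i : Fin ℓ), ⨅ (j : Fin ℓ), NN i j with hHdef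
    haveI hHn : H.Normal := by
      constructor
      intro x hx g
      simp only [hHdef, Subgroup.mem_iInf] at hx ⊢
      intro i j
      exact (hNN i j).1.conj_mem x (hx i j) g
    haveI hHf : H.FiniteIndex :=
      Subgroup.finiteIndex_iInf fun i => Subgroup.finiteIndex_iInf fun j => (hNN i j).2.1
    haveI : Finite (G ⧸ H) := H.finite_quotient_of_finiteIndex
    haveI : Fintype (G ⧸ H) := Fintype.ofFinite _
    have havoid : ∀ i j, i < j → j < ℓ →
        (wrd f (L.take i))⁻¹ * wrd f (L.take j) ∉ H := by
      intro i j h1 h2 hmem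
      have hij : i < ℓ := h1.trans h2
      have h3 : H ≤ NN i j := by
        rw [hHdef]
        exact le_trans (iInf_le _ (⟨i, hij⟩ : Fin ℓ)) (iInf_le _ (⟨j, h2⟩ : Fin ℓ))
      exact (hNN i j).2.2 h1 h2 (h3 hmem)
    -- vertices
    have hvtx0 : vtx H f L 0 = 1 := vtx_zero H f L
    have hvtxl : vtx H f L ℓ = 1 := by
      have h1 : L.take ℓ = L := by rw [← hLlen]; exact List.take_length (l := L)
      rw [vtx, h1, hwrdL]
      exact QuotientGroup.mk_one (N := H)
    have hvne : ∀ i j, i < j → j < ℓ → vtx H f L i ≠ vtx H f L j := by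
      intro i j h1 h2 he
      apply havoid i j h1 h2
      rw [vtx, vtx] at he
      exact QuotientGroup.eq.mp he
    -- no reduced word has adjacent cancelling letters
    have hadj : ∀ i, i + 1 < ℓ →
        ¬((lett L i).1 = (lett L (i+1)).1 ∧ (lett L i).2 = !((lett L (i+1)).2)) := by
      rintro i hi ⟨h1, h2⟩
      have hii : i < L.length := by omega
      have hi1 : i + 1 < L.length := by omega
      have e1 : lett L i = L[i] := by
        simp only [lett]
        exact List.getD_eq_getElem L default hii
      have e2 : lett L (i+1) = L[i+1] := by
        simp only [lett]
        exact List.getD_eq_getElem L default hi1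
      have hl1 : L[i] = ((lett L i).1, (lett L i).2) := by
        rw [← e1]
      have hl2 : L[i+1] = ((lett L i).1, !(lett L i).2) := by
        rw [← e2]
        have hs : (lett L (i+1)).2 = !(lett L i).2 := by
          rw [h2, Bool.not_not]
        exact Prod.ext (h1.symm) hs
      have hdecomp : L = L.take i ++ ((lett L i).1, (lett L i).2) ::
          ((lett L i).1, !(lett L i).2) :: L.drop (i+2) := by
        calc L = L.take i ++ L.drop i := (List.take_append_drop i L).symm
          _ = _ := by
            rw [List.drop_eq_getElem_cons hii, List.drop_eq_getElem_cons hi1, hl1, hl2]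
      have hred : FreeGroup.reduce L = L := FreeGroup.reduce_toWord w
      exact FreeGroup.reduce.not (hred.trans hdecomp)
    -- edges are distinct
    have hedne : ∀ i j, i < j → j < ℓ → edg H f L i ≠ edg H f L j := by
      intro i j h1 h2 he
      have hiL : i < L.length := by omega
      have hjL : j < L.length := by omega
      rcases hbi : (lett L i).2 with _ | _ <;> rcases hbj : (lett L j).2 with _ | _ <;>
        rw [edg, edg, hbi, hbj] at he <;>
        simp only [cond_true, cond_false, Prod.mk.injEq] at he <;>
        obtain ⟨hv, ht⟩ := he
      · -- false, false
        by_cases hj1 : j + 1 = ℓ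
        · rw [hj1, hvtxl, ← hvtx0] at hv
          exact hvne 0 (i+1) (by omega) (by omega) hv.symm
        · exact hvne (i+1) (j+1) (by omega) (by omega) hv
      · -- i false, j true
        by_cases hij1 : i + 1 = j
        · subst hij1
          exact hadj i (by omega) ⟨ht, by simp [hbi, hbj]⟩
        · exact hvne (i+1) j (by omega) h2 hv
      · -- i true, j false
        have hvj : vtx H f L j = vtx H f L (i+1) := by
          rw [vtx_succ_false H f L hjL hbj, vtx_succ_true H f L hiL hbi, ← hv, ht]
        by_cases hj1 : j + 1 = ℓ
        · rw [hj1, hvtxl, ← hvtx0] at hv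
          have hi0 : i = 0 := by
            by_contra hi0
            exact hvne 0 i (by omega) (by omega) hv.symm
          subst hi0
          by_cases hj2 : j = 1
          · subst hj2
            exact hadj 0 (by omega) ⟨ht, by simp [hbi, hbj]⟩
          · exact hvne 1 j (by omega) h2 hvj.symm
        · exact hvne i (j+1) (by omega) (by omega) hv
      · -- true, true
        exact hvne i j h1 h2 hv
    -- forced structure of a tree edge lying on the cycle
    have hforce : ∀ i, i < ℓ → ∀ q : G ⧸ H, q ≠ 1 → treeEdge H f hfr q = edg H f L i →
        (q = vtx H f L i ∧ qn H f (vtx H f L (i+1)) < qn H f q) ∨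
        (q = vtx H f L (i+1) ∧ qn H f (vtx H f L i) < qn H f q) := by
      intro i hi q hq hte
      have hiL : i < L.length := by omega
      have hcase := treeEdge_cases H f hfr hq
      rw [hte] at hcase
      rcases edg_spec H f L hiL with ⟨ha, hb⟩ | ⟨ha, hb⟩ <;>
        rcases hcase with ⟨hc, hd⟩ | ⟨hc, hd⟩
      · exact Or.inr ⟨by rw [← hc, hb], by rw [← ha]; exact hd⟩
      · exact Or.inl ⟨by rw [← hc, ha], by rw [← hb]; exact hd⟩
      · exact Or.inl ⟨by rw [← hc, hb], by rw [← ha]; exact hd⟩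
      · exact Or.inr ⟨by rw [← hc, ha], by rw [← hb]; exact hd⟩
    -- there is a non-tree edge on the cycle
    obtain ⟨i₀, hi₀l, hi₀⟩ : ∃ i, i < ℓ ∧ ∀ q : G ⧸ H, q ≠ 1 →
        treeEdge H f hfr q ≠ edg H f L i := by
      by_contra hcon
      push_neg at hcon
      have htree : ∀ i, i < ℓ → ∃ q : G ⧸ H, q ≠ 1 ∧ treeEdge H f hfr q = edg H f L i := by
        intro i hi
        obtain ⟨q, hq1, hq2⟩ := hcon i hi
        exact ⟨q, hq1, hq2⟩
      by_cases hl1 : ℓ = 1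
      · -- a single self-loop cannot be a tree edge
        obtain ⟨q, hq, hte⟩ := htree 0 hlpos
        have hv1 : vtx H f L 1 = 1 := by
          have : (1:ℕ) = ℓ := hl1.symm
          rw [this]
          exact hvtxl
        rcases hforce 0 hlpos q hq hte with ⟨hc, _⟩ | ⟨hc, _⟩
        · exact hq (hc.trans hvtx0)
        · exact hq (hc.trans hv1)
      · -- ℓ ≥ 2 : look at a vertex of maximal depth
        have hl2 : 2 ≤ ℓ := by omega
        obtain ⟨m, hmmem, hmax⟩ := Finset.exists_max_image (Finset.range (ℓ+1))
          (fun i => qn H f (vtx H f L i)) ⟨0, by simp⟩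
        have hmle : m ≤ ℓ := by
          have := Finset.mem_range.mp hmmem
          omega
        have hmax' : ∀ i, i ≤ ℓ → qn H f (vtx H f L i) ≤ qn H f (vtx H f L m) := by
          intro i hi
          exact hmax i (Finset.mem_range.mpr (by omega))
        have hv1ne : vtx H f L 1 ≠ 1 := by
          intro h
          exact hvne 0 1 (by omega) (by omega) (by rw [hvtx0, h])
        have hq1pos : 0 < qn H f (vtx H f L 1) := by
          rcases Nat.eq_zero_or_pos (qn H f (vtx H f L 1)) with h | h
          · exact absurd (qn_eq_zero H f hfr h) hv1ne
          · exact h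
        have hqm : 0 < qn H f (vtx H f L m) :=
          lt_of_lt_of_le hq1pos (hmax' 1 (by omega))
        have hvm : vtx H f L m ≠ 1 := by
          intro h
          rw [h, qn_one] at hqm
          omega
        have hm0 : m ≠ 0 := by
          intro h
          rw [h, hvtx0] at hvm
          exact hvm rfl
        have hml : m ≠ ℓ := by
          intro h
          rw [h, hvtxl] at hvm
          exact hvm rfl
        -- the edge m is the tree edge of vtx m
        obtain ⟨q, hq, hte⟩ := htree m (by omega)
        have hq_eq : q = vtx H f L m := by
          rcases hforce m (by omega) q hq hte with ⟨hc, _⟩ | ⟨hc, hd⟩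
          · exact hc
          · exfalso
            rw [hc] at hd
            have := hmax' (m+1) (by omega)
            omega
        rw [hq_eq] at hte
        -- the edge m-1 is also the tree edge of vtx m
        obtain ⟨k, hk⟩ : ∃ k, k + 1 = m := ⟨m - 1, by omega⟩
        obtain ⟨q', hq', hte'⟩ := htree k (by omega)
        have hq'_eq : q' = vtx H f L m := by
          rcases hforce k (by omega) q' hq' hte' with ⟨hc, hd⟩ | ⟨hc, _⟩
          · exfalso
            rw [hc] at hd
            rw [hk] at hd
            have := hmax' k (by omega)
            omega
          · rw [hc, hk]
        rw [hq'_eq] at hte'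
        have : edg H f L k = edg H f L m := by rw [← hte, ← hte']
        exact hedne k m (by omega) (by omega) this
    -- Now the counting argument.
    set e₀ := edg H f L i₀ with he₀def
    set treeF : Finset ((G ⧸ H) × T) :=
      (Finset.univ.erase (1 : G ⧸ H)).image (treeEdge H f hfr) with htreeFdef
    have he₀nt : e₀ ∉ treeF := by
      intro hmem
      rw [htreeFdef, Finset.mem_image] at hmem
      obtain ⟨q, hq, heq⟩ := hmem
      exact hi₀ q (Finset.mem_erase.mp hq).1 heq
    set AF : Finset ((G ⧸ H) × T) := Finset.univ \ insert e₀ treeF with hAFdef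
    set n := Fintype.card (G ⧸ H) with hndef
    have hn1 : 1 ≤ n := Fintype.card_pos
    have htreeFcard : treeF.card = n - 1 := by
      rw [htreeFdef]
      rw [Finset.card_image_of_injOn (fun q hq q' hq' h =>
        treeEdge_inj H f hfr (Finset.mem_erase.mp hq).1 (Finset.mem_erase.mp hq').1 h)]
      rw [Finset.card_erase_of_mem (Finset.mem_univ _), Finset.card_univ]
    have hAFcard : AF.card = n * S.card - n := by
      rw [hAFdef, Finset.card_sdiff_of_subset (Finset.subset_univ _),
        Finset.card_insert_of_notMem he₀nt, htreeFcard, Finset.card_univ,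
        Fintype.card_prod, Fintype.card_coe]
      rw [← hndef]
      omega
    set K : Subgroup G := Subgroup.closure (↑(AF.image (sgen H f hfr)) : Set G) with hKdef
    -- all the Schreier generators lie in K
    have hprod : ((List.range ℓ).map (sg H f hfr L)).prod = 1 := by
      have h1 := telescope H f hfr L ℓ (by omega)
      have h2 : L.take ℓ = L := by rw [← hLlen]; exact List.take_length (l := L)
      rw [h2, hwrdL] at h1
      rw [h1, hvtxl, RR_one]
      simp
    have hsgK' : ∀ i, i < ℓ → i ≠ i₀ → sgen H f hfr (edg H f L i) ∈ K := by
      intro i hil hine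
      by_cases hin : edg H f L i ∈ treeF
      · rw [htreeFdef, Finset.mem_image] at hin
        obtain ⟨q, hq, heq⟩ := hin
        rw [← heq, sgen_treeEdge H f hfr (Finset.mem_erase.mp hq).1]
        exact one_mem K
      · have hAF : edg H f L i ∈ AF := by
          rw [hAFdef, Finset.mem_sdiff]
          refine ⟨Finset.mem_univ _, ?_⟩
          intro hmem
          rcases Finset.mem_insert.mp hmem with h | h
          · rw [he₀def] at h
            rcases lt_or_gt_of_ne hine with hlt | hlt
            · exact hedne i i₀ hlt hi₀l h
            · exact hedne i₀ i hlt hil h.symm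
          · exact hin h
        rw [hKdef]
        exact Subgroup.subset_closure (Finset.mem_coe.mpr
          (Finset.mem_image_of_mem _ hAF))
    have hsgK2 : ∀ i, i < ℓ → i ≠ i₀ → sg H f hfr L i ∈ K := by
      intro i hil hine
      rw [sg]
      rcases (lett L i).2 with _ | _
      · exact inv_mem (hsgK' i hil hine)
      · exact hsgK' i hil hine
    have hsgenK : ∀ p : (G ⧸ H) × T, sgen H f hfr p ∈ K := by
      intro p
      by_cases hin : p ∈ treeF
      · rw [htreeFdef, Finset.mem_image] at hin
        obtain ⟨q, hq, heq⟩ := hin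
        rw [← heq, sgen_treeEdge H f hfr (Finset.mem_erase.mp hq).1]
        exact one_mem K
      · by_cases hpe : p = e₀
        · -- the relation kills this generator
          subst hpe
          obtain ⟨m, hm⟩ : ∃ m, ℓ = (i₀ + 1) + m := ⟨ℓ - i₀ - 1, by omega⟩
          have hsplit : List.range ℓ = (List.range i₀ ++ [i₀]) ++
              (List.range m).map (fun x => (i₀+1) + x) := by
            rw [hm, List.range_add, List.range_succ]
          rw [hsplit, List.map_append, List.map_append, List.prod_append,
            List.prod_append, List.map_singleton, List.prod_singleton,
            List.map_map] at hprod
          set P₁ := ((List.range i₀).map (sg H f hfr L)).prod with hP₁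
          set P₂ := ((List.range m).map (sg H f hfr L ∘ fun x => (i₀+1) + x)).prod with hP₂
          have h1 : P₁ ∈ K := by
            rw [hP₁]
            refine Subgroup.list_prod_mem K ?_
            intro x hx
            rw [List.mem_map] at hx
            obtain ⟨i, hi, rfl⟩ := hx
            have hi' := List.mem_range.mp hi
            exact hsgK2 i (by omega) (by omega)
          have h2 : P₂ ∈ K := by
            rw [hP₂]
            refine Subgroup.list_prod_mem K ?_
            intro x hx
            rw [List.mem_map] at hx
            obtain ⟨i, hi, rfl⟩ := hx
            have hi' := List.mem_range.mp hi
            show sg H f hfr L ((i₀+1) + i) ∈ K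
            exact hsgK2 _ (by omega) (by omega)
          have h6 : sg H f hfr L i₀ ∈ K := by
            have h4 : P₁ * sg H f hfr L i₀ * P₂ = 1 := hprod
            have h5 : sg H f hfr L i₀ = P₁⁻¹ * (P₁ * sg H f hfr L i₀ * P₂) * P₂⁻¹ := by
              group
            rw [h4] at h5
            rw [h5]
            exact mul_mem (mul_mem (inv_mem h1) (one_mem K)) (inv_mem h2)
          rw [sg] at h6
          rcases hb : (lett L i₀).2 with _ | _ <;> rw [hb] at h6
          · simpa using inv_mem h6
          · simpa using h6
        · have hAF : p ∈ AF := by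
            rw [hAFdef, Finset.mem_sdiff]
            refine ⟨Finset.mem_univ _, ?_⟩
            intro hmem
            rcases Finset.mem_insert.mp hmem with h | h
            · exact hpe h
            · exact hin h
          rw [hKdef]
          exact Subgroup.subset_closure (Finset.mem_coe.mpr
            (Finset.mem_image_of_mem _ hAF))
    -- K = H
    have hKH : Subgroup.closure (↑(AF.image (sgen H f hfr)) : Set G) = H := by
      apply le_antisymm
      · rw [Subgroup.closure_le]
        intro x hx
        rw [Finset.coe_image, Set.mem_image] at hx
        obtain ⟨p, _, rfl⟩ := hx
        exact sgen_mem H f hfr p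
      · intro h hh
        obtain ⟨L', hL'⟩ := exists_wrd f hfr h
        have ht := telescope H f hfr L' L'.length le_rfl
        have hv : vtx H f L' L'.length = 1 := by
          rw [vtx, List.take_length, hL']
          exact (QuotientGroup.eq_one_iff h).mpr hh
        rw [hv, RR_one, List.take_length, hL'] at ht
        have h7 : h = ((List.range L'.length).map (sg H f hfr L')).prod := by
          rw [ht]
          group
        rw [h7]
        rw [← hKdef]
        refine Subgroup.list_prod_mem K ?_
        intro x hx
        rw [List.mem_map] at hx
        obtain ⟨i, _, rfl⟩ := hx
        rw [sg]
        rcases (lett L' i).2 with _ | _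
        · exact inv_mem (hsgenK _)
        · exact hsgenK _
    -- the rank bound contradicts multiplicativity
    have hrk : subgroupRank H ≤ n * S.card - n := by
      have h1 : subgroupRank H ≤ (AF.image (sgen H f hfr)).card :=
        Nat.sInf_le ⟨AF.image (sgen H f hfr), rfl, hKH⟩
      have h2 := Finset.card_image_le (s := AF) (f := sgen H f hfr)
      omega
    have hmm := hmult ⊤ H le_top hHf
    rw [Subgroup.relIndex_top_right] at hmm
    have hidx : H.index = n := by
      rw [Subgroup.index, hndef, Nat.card_eq_fintype_card]
    rw [hidx, ← hScard] at hmm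
    have hd1 : 1 ≤ S.card := Finset.card_pos.mpr ⟨(default : T).1, (default : T).2⟩
    have hnd : n ≤ n * S.card := Nat.le_mul_of_pos_right n (by omega)
    have hcast : ((n * S.card - n : ℕ) : ℤ) = (n : ℤ) * S.card - n := by
      push_cast [Nat.cast_sub hnd]
      ring
    have hle : (subgroupRank H : ℤ) ≤ (n : ℤ) * S.card - n := by
      rw [← hcast]
      exact_mod_cast hrk
    have hexp : (n : ℤ) * ((S.card : ℤ) - 1) = (n : ℤ) * S.card - n := by ring
    rw [hexp] at hmm
    omega
end

section
/- Let G ≠ {1} be a finitely generated, residually finite group, let F be a free group of rank rk(G) with basis 𝒳, and let π : F ↠ G be a surjective homomorphism with kernel R. If R ≠ {1} and r ∈ R ∖ {1} is an element of minimal word length (with respect to the basis 𝒳) among nontrivial elements of R, then there exists a subgroup F₁ of finite index in F with R ≤ F₁ such that r is a member of some basis of the (free) group F₁. -/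
namespace SchreierAux
set_option linter.unusedSectionVars false

open FreeGroup

variable {X : Type*} {Q : Type*} [Group Q]

/-- Left-translation action of `Q` on `FreeGroup (Q × X)`. -/
def act : Q →* MulAut (FreeGroup (Q × X)) where
  toFun q := FreeGroup.freeGroupCongr ((Equiv.mulLeft q).prodCongr (Equiv.refl X))
  map_one' := by
    show freeGroupCongr _ = 1
    have h : ((Equiv.mulLeft (1:Q)).prodCongr (Equiv.refl X)) = Equiv.refl (Q × X) := by
      ext ⟨q, x⟩ <;> simp
    rw [h, FreeGroup.freeGroupCongr_refl]; rfl
  map_mul' := fun a b => by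
    show freeGroupCongr _ = freeGroupCongr _ * freeGroupCongr _
    have h : ((Equiv.mulLeft (a*b)).prodCongr (Equiv.refl X)) =
        ((Equiv.mulLeft b).prodCongr (Equiv.refl X)).trans
          ((Equiv.mulLeft a).prodCongr (Equiv.refl X)) := by
      ext ⟨q, x⟩ <;> simp [mul_assoc]
    rw [h, ← FreeGroup.freeGroupCongr_trans]
    rfl

@[simp] lemma act_of (q p : Q) (x : X) :
    (act q) (FreeGroup.of (p, x) : FreeGroup (Q × X)) = FreeGroup.of (q * p, x) := by
  simp [act, FreeGroup.freeGroupCongr]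

lemma act_act (q q' : Q) (e : FreeGroup (Q × X)) :
    act q (act q' e) = act (q * q') e := by
  rw [MonoidHom.map_mul act q q']; rfl

variable (φ : FreeGroup X →* Q)

/-- The Reidemeister–Schreier rewriting homomorphism. -/
noncomputable def theta : FreeGroup X →* SemidirectProduct (FreeGroup (Q × X)) Q act :=
  FreeGroup.lift fun x => ⟨FreeGroup.of ((1 : Q), x), φ (FreeGroup.of x)⟩

lemma theta_right (w : FreeGroup X) : (theta φ w).right = φ w := by
  have h : (SemidirectProduct.rightHom).comp (theta φ) = φ := by
    apply FreeGroup.ext_hom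
    intro a
    simp [theta]
  exact DFunLike.congr_fun h w

/-- Left component of the rewriting. -/
noncomputable def xi (w : FreeGroup X) : FreeGroup (Q × X) := (theta φ w).left

@[simp] lemma xi_one : xi φ (1 : FreeGroup X) = 1 := by simp [xi]

@[simp] lemma xi_of (x : X) : xi φ (FreeGroup.of x) = FreeGroup.of ((1:Q), x) := by
  simp [xi, theta]

lemma xi_mul (u v : FreeGroup X) : xi φ (u * v) = xi φ u * act (φ u) (xi φ v) := by
  unfold xi
  rw [MonoidHom.map_mul (theta φ), SemidirectProduct.mul_left, theta_right]

lemma xi_inv (w : FreeGroup X) : xi φ w⁻¹ = act (φ w)⁻¹ (xi φ w)⁻¹ := by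
  unfold xi
  rw [MonoidHom.map_inv (theta φ), SemidirectProduct.inv_left, theta_right]

variable (T : Q → FreeGroup X)

/-- Schreier generators. -/
def gam : Q × X → FreeGroup X := fun d =>
  T d.1 * FreeGroup.of d.2 * (T (d.1 * φ (FreeGroup.of d.2)))⁻¹

/-- Evaluation homomorphism sending formal edges to Schreier generators. -/
noncomputable def lam : FreeGroup (Q × X) →* FreeGroup X := FreeGroup.lift (gam φ T)

@[simp] lemma lam_of (d : Q × X) : lam φ T (FreeGroup.of d) = gam φ T d := by
  simp [lam]

/-- The key rewriting identity. -/
theorem key (w : FreeGroup X) : ∀ q : Q,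
    T q * w = lam φ T (act q (xi φ w)) * T (q * φ w) := by
  induction w using FreeGroup.induction_on with
  | C1 => intro q; simp
  | of x =>
      intro q
      rw [xi_of, act_of, mul_one, lam_of]
      simp [gam, mul_assoc]
  | inv_of x ih =>
      have hp : (FreeGroup.of x : FreeGroup X) = pure x := rfl
      rw [hp] at ih ⊢
      intro q
      have h := ih (q * (φ (pure x))⁻¹)
      rw [inv_mul_cancel_right] at h
      have h2 : T q * (pure x : FreeGroup X)⁻¹
          = (lam φ T ((act (q * (φ (pure x))⁻¹)) (xi φ (pure x))))⁻¹
            * T (q * (φ (pure x))⁻¹) := by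
        have h3 : T q = (lam φ T ((act (q * (φ (pure x))⁻¹)) (xi φ (pure x))))⁻¹
            * (T (q * (φ (pure x))⁻¹) * pure x) := by
          rw [h]; group
        rw [h3]; group
      rw [h2, xi_inv, act_act]
      simp only [_root_.map_inv]
  | mul u v ihu ihv =>
      intro q
      calc T q * (u * v) = (T q * u) * v := by rw [mul_assoc]
        _ = lam φ T (act q (xi φ u)) * (T (q * φ u) * v) := by rw [ihu q, mul_assoc]
        _ = lam φ T (act q (xi φ u)) * (lam φ T (act (q * φ u) (xi φ v)) * T (q * φ u * φ v)) := by
            rw [ihv (q * φ u)]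
        _ = lam φ T (act q (xi φ (u * v))) * T (q * φ (u * v)) := by
            rw [xi_mul, MonoidHom.map_mul φ, ← mul_assoc q (φ u) (φ v),
              _root_.map_mul (act q), act_act, MonoidHom.map_mul (lam φ T)]
            group


/-- Explicit Nielsen–Schreier: with a spanning-tree-like transversal data `(T, D)`,
the kernel of `φ` is freely generated by the Schreier generators outside `D`. -/
theorem exists_mulEquiv_ker (D : Set (Q × X))
    (hT1 : T 1 = 1)
    (hTphi : ∀ q, φ (T q) = q)
    (hD : ∀ d ∈ D, T d.1 * FreeGroup.of d.2 = T (d.1 * φ (FreeGroup.of d.2)))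
    (hTD : ∀ q, xi φ (T q) ∈ Subgroup.closure (FreeGroup.of '' D)) :
    ∃ e : FreeGroup {d : Q × X // d ∉ D} ≃* φ.ker,
      ∀ (d : Q × X) (h : d ∉ D), ((e (FreeGroup.of ⟨d, h⟩) : φ.ker) : FreeGroup X)
        = gam φ T d := by
  classical
  set B := {d : Q × X // d ∉ D}
  set p' : FreeGroup (Q × X) →* FreeGroup B :=
    FreeGroup.lift (fun d : Q × X => if h : d ∈ D then 1 else FreeGroup.of (⟨d, h⟩ : B))
    with hp'
  have hp'_mem : ∀ d (h : d ∈ D), p' (FreeGroup.of d) = 1 := by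
    intro d h; simp [hp', dif_pos h]
  have hp'_notmem : ∀ d (h : d ∉ D), p' (FreeGroup.of d) = FreeGroup.of (⟨d, h⟩ : B) := by
    intro d h; simp [hp', dif_neg h]
  have hgamker : ∀ d : Q × X, gam φ T d ∈ φ.ker := by
    intro d
    simp [gam, MonoidHom.mem_ker, hTphi]
  set Psi : FreeGroup B →* FreeGroup X := FreeGroup.lift (fun b : B => gam φ T b.1) with hPsi
  have hPsi_of : ∀ b : B, Psi (FreeGroup.of b) = gam φ T b.1 := by intro b; simp [hPsi]
  have hPsimem : ∀ e, Psi e ∈ φ.ker := by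
    have h1 : φ.comp Psi = 1 := by
      apply FreeGroup.ext_hom
      intro b
      have := hgamker b.1
      rw [MonoidHom.mem_ker] at this
      simp [hPsi, this]
    intro e
    rw [MonoidHom.mem_ker]
    have := DFunLike.congr_fun h1 e
    simpa using this
  set PsiK : FreeGroup B →* φ.ker := Psi.codRestrict φ.ker hPsimem with hPsiK
  have hlam_eq : lam φ T = Psi.comp p' := by
    apply FreeGroup.ext_hom
    intro d
    by_cases h : d ∈ D
    · have h2 := hD d h
      have : gam φ T d = 1 := by
        rw [gam, h2]; simp
      simp [this, hp'_mem d h]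
    · simp [hp'_notmem d h, hPsi_of]
  -- p' kills rewrites of transversal elements
  have hclos : Subgroup.closure (FreeGroup.of '' D) ≤ p'.ker := by
    rw [Subgroup.closure_le]
    rintro _ ⟨d, hd, rfl⟩
    exact hp'_mem d hd
  have hp'T : ∀ q, p' (xi φ (T q)) = 1 := fun q => hclos (hTD q)
  -- surjectivity
  have hsurj : ∀ k ∈ φ.ker, Psi (p' (xi φ k)) = k := by
    intro k hk
    have h1 := key φ T k 1
    rw [hT1, one_mul, MonoidHom.mem_ker.mp hk, mul_one, hT1, mul_one] at h1
    have h2 : (act (1:Q) : MulAut (FreeGroup (Q × X))) (xi φ k) = xi φ k := by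
      rw [_root_.map_one act]; rfl
    rw [h2, hlam_eq] at h1
    simpa using h1.symm
  -- the rewriting of a Schreier generator
  have hxigam : ∀ d : Q × X,
      xi φ (gam φ T d) = xi φ (T d.1) * FreeGroup.of d
        * (xi φ (T (d.1 * φ (FreeGroup.of d.2))))⁻¹ := by
    intro d
    set v := d.1 * φ (FreeGroup.of d.2) with hv
    have hA : xi φ (T d.1 * FreeGroup.of d.2) = xi φ (T d.1) * FreeGroup.of d := by
      rw [xi_mul, hTphi, xi_of, act_of, mul_one]
    have hφA : φ (T d.1 * FreeGroup.of d.2) = v := by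
      rw [MonoidHom.map_mul, hTphi]
    have hB : xi φ ((T v)⁻¹) = act v⁻¹ (xi φ (T v))⁻¹ := by
      rw [xi_inv, hTphi]
    calc xi φ (gam φ T d)
        = xi φ (T d.1 * FreeGroup.of d.2) * act v (xi φ ((T v)⁻¹)) := by
          rw [gam, xi_mul, hφA]
      _ = xi φ (T d.1) * FreeGroup.of d * (xi φ (T v))⁻¹ := by
          rw [hA, hB, act_act, mul_inv_cancel, _root_.map_one act]
          rfl
  -- the left inverse homomorphism
  have hφcoe : ∀ k : φ.ker, φ (k : FreeGroup X) = 1 := fun k => MonoidHom.mem_ker.mp k.2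
  set chi : φ.ker →* FreeGroup B :=
    { toFun := fun k => p' (xi φ (k : FreeGroup X))
      map_one' := by simp
      map_mul' := by
        intro a b
        have h5 : xi φ ((a : FreeGroup X) * (b : FreeGroup X)) = xi φ a * xi φ b := by
          rw [xi_mul, hφcoe a, _root_.map_one act]
          rfl
        show p' (xi φ ((a * b : φ.ker) : FreeGroup X)) = _
        rw [Subgroup.coe_mul, h5, MonoidHom.map_mul p'] } with hchi
  have hchiPsi : ∀ b : B, chi (PsiK (FreeGroup.of b)) = FreeGroup.of b := by
    rintro ⟨d, hd⟩
    have h1 : ((PsiK (FreeGroup.of ⟨d, hd⟩) : φ.ker) : FreeGroup X) = gam φ T d := by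
      simp [hPsiK, hPsi_of]
    show p' (xi φ _) = _
    rw [h1, hxigam d, MonoidHom.map_mul p', MonoidHom.map_mul p', MonoidHom.map_inv p',
      hp'T, hp'T, hp'_notmem d hd]
    simp
  have hinj : Function.Injective PsiK := by
    have hcomp : chi.comp PsiK = MonoidHom.id (FreeGroup B) := by
      apply FreeGroup.ext_hom
      intro b
      simpa using hchiPsi b
    intro a b hab
    have ha := DFunLike.congr_fun hcomp a
    have hb := DFunLike.congr_fun hcomp b
    simp only [MonoidHom.comp_apply, MonoidHom.id_apply] at ha hb
    rw [← ha, ← hb, hab]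
  have hsurj2 : Function.Surjective PsiK := by
    intro k
    refine ⟨p' (xi φ (k : FreeGroup X)), ?_⟩
    apply Subtype.ext
    show Psi (p' (xi φ (k : FreeGroup X))) = (k : FreeGroup X)
    exact hsurj _ k.2
  refine ⟨MulEquiv.ofBijective PsiK ⟨hinj, hsurj2⟩, ?_⟩
  intro d h
  show ((PsiK (FreeGroup.of ⟨d, h⟩) : φ.ker) : FreeGroup X) = gam φ T d
  simp [hPsiK, hPsi_of]

/-- Invariants for the partial spanning tree construction. -/
structure GoodT (φ : FreeGroup X →* Q) (n : ℕ) (qv : ℕ → Q) (pfx : ℕ → FreeGroup X)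
    (fE : Q × X) (A : Set Q) (T : Q → FreeGroup X) (D : Set (Q × X)) : Prop where
  hA : ∀ i, i < n → qv i ∈ A
  hT1 : T 1 = 1
  hTp : ∀ i, i < n → T (qv i) = pfx i
  hphi : ∀ q ∈ A, φ (T q) = q
  hxi : ∀ q ∈ A, xi φ (T q) ∈ Subgroup.closure (FreeGroup.of '' D)
  hDp : ∀ d ∈ D, d.1 ∈ A ∧ d.1 * φ (FreeGroup.of d.2) ∈ A ∧
      T d.1 * FreeGroup.of d.2 = T (d.1 * φ (FreeGroup.of d.2))
  hf : fE ∉ D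

variable {φ : FreeGroup X →* Q} {n : ℕ} {qv : ℕ → Q} {pfx : ℕ → FreeGroup X} {fE : Q × X}

theorem GoodT.step [Finite Q]
    (hφs : Function.Surjective φ) (hn : 0 < n) (hqv0 : qv 0 = 1)
    (hfend : ∀ A : Set Q, (∀ i, i < n → qv i ∈ A) →
      fE.1 ∈ A ∧ fE.1 * φ (FreeGroup.of fE.2) ∈ A)
    {A : Set Q} {T : Q → FreeGroup X} {D : Set (Q × X)}
    (hG : GoodT φ n qv pfx fE A T D) (hA : A ≠ Set.univ) :
    ∃ A' T' D', GoodT φ n qv pfx fE A' T' D' ∧ A ⊆ A' ∧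
      (Set.univ \ A').ncard < (Set.univ \ A).ncard := by
  classical
  obtain ⟨hAq, hT1, hTp, hphi, hxi, hDp, hf⟩ := hG
  have h1A : (1 : Q) ∈ A := hqv0 ▸ hAq 0 hn
  have hfe := hfend A hAq
  -- find a boundary edge
  have hbd : ∃ q' ∈ A, ∃ x : X,
      q' * φ (FreeGroup.of x) ∉ A ∨ q' * (φ (FreeGroup.of x))⁻¹ ∉ A := by
    by_contra hcon
    push_neg at hcon
    apply hA
    have key2 : ∀ w : FreeGroup X, ∀ a ∈ A, a * φ w ∈ A := by
      intro w
      induction w using FreeGroup.induction_on with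
      | C1 => intro a ha; simpa using ha
      | of x => intro a ha; exact (hcon a ha x).1
      | inv_of x ih =>
          intro a ha
          rw [MonoidHom.map_inv]
          exact (hcon a ha x).2
      | mul u v ihu ihv =>
          intro a ha
          rw [MonoidHom.map_mul, ← mul_assoc]
          exact ihv _ (ihu a ha)
    apply Set.eq_univ_of_forall
    intro q
    obtain ⟨w, rfl⟩ := hφs q
    simpa using key2 w 1 h1A
  obtain ⟨q', hq', x, hx⟩ := hbd
  have hmono : ∀ (d0 : Q × X), Subgroup.closure (FreeGroup.of '' D) ≤
      Subgroup.closure (FreeGroup.of '' (insert d0 D)) :=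
    fun d0 => Subgroup.closure_mono (Set.image_mono (Set.subset_insert _ _))
  rcases hx with hx | hx
  · -- positive boundary edge
    set v := q' * φ (FreeGroup.of x) with hv
    have hqv' : q' ≠ v := fun h => hx (h ▸ hq')
    have hvA : ∀ q ∈ A, q ≠ v := fun q hq h => hx (h ▸ hq)
    refine ⟨insert v A, Function.update T v (T q' * FreeGroup.of x), insert (q', x) D,
      ⟨?_, ?_, ?_, ?_, ?_, ?_, ?_⟩, Set.subset_insert _ _, ?_⟩
    · intro i hi; exact Set.mem_insert_iff.mpr (Or.inr (hAq i hi))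
    · rw [Function.update_of_ne (hvA 1 h1A) _ T, hT1]
    · intro i hi; rw [Function.update_of_ne (hvA _ (hAq i hi)) _ T]; exact hTp i hi
    · intro q hq
      rcases Set.mem_insert_iff.mp hq with rfl | hq
      · rw [Function.update_self, MonoidHom.map_mul, hphi q' hq']
      · rw [Function.update_of_ne (hvA q hq) _ T]; exact hphi q hq
    · intro q hq
      rcases Set.mem_insert_iff.mp hq with rfl | hq
      · rw [Function.update_self]
        rw [xi_mul, hphi q' hq', xi_of, act_of, mul_one]
        exact mul_mem (hmono _ (hxi q' hq'))
          (Subgroup.subset_closure (Set.mem_image_of_mem _ (Set.mem_insert _ _)))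
      · rw [Function.update_of_ne (hvA q hq) _ T]
        exact hmono _ (hxi q hq)
    · intro d hd
      rcases Set.mem_insert_iff.mp hd with rfl | hd
      · refine ⟨Set.mem_insert_iff.mpr (Or.inr hq'), Set.mem_insert_iff.mpr (Or.inl rfl), ?_⟩
        rw [Function.update_of_ne hqv' _ T, Function.update_self]
      · obtain ⟨h1, h2, h3⟩ := hDp d hd
        exact ⟨Set.mem_insert_iff.mpr (Or.inr h1), Set.mem_insert_iff.mpr (Or.inr h2),
          by rw [Function.update_of_ne (hvA _ h1) _ T, Function.update_of_ne (hvA _ h2) _ T]; exact h3⟩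
    · intro hmem
      rcases Set.mem_insert_iff.mp hmem with heq | hmem
      · apply hx
        have : fE.1 * φ (FreeGroup.of fE.2) = v := by rw [heq]
        exact this ▸ hfe.2
      · exact hf hmem
    · apply Set.ncard_lt_ncard _ (Set.finite_univ.subset (Set.diff_subset))
      constructor
      · exact Set.diff_subset_diff_right (Set.subset_insert _ _)
      · intro hsub
        have hvmem : v ∈ Set.univ \ A := ⟨trivial, hx⟩
        have := hsub hvmem
        exact this.2 (Set.mem_insert _ _)
  · -- negative boundary edge
    set v := q' * (φ (FreeGroup.of x))⁻¹ with hv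
    have hvq : v * φ (FreeGroup.of x) = q' := by rw [hv, inv_mul_cancel_right]
    have hqv' : q' ≠ v := fun h => hx (h ▸ hq')
    have hvA : ∀ q ∈ A, q ≠ v := fun q hq h => hx (h ▸ hq)
    refine ⟨insert v A, Function.update T v (T q' * (FreeGroup.of x)⁻¹), insert (v, x) D,
      ⟨?_, ?_, ?_, ?_, ?_, ?_, ?_⟩, Set.subset_insert _ _, ?_⟩
    · intro i hi; exact Set.mem_insert_iff.mpr (Or.inr (hAq i hi))
    · rw [Function.update_of_ne (hvA 1 h1A) _ T, hT1]
    · intro i hi; rw [Function.update_of_ne (hvA _ (hAq i hi)) _ T]; exact hTp i hi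
    · intro q hq
      rcases Set.mem_insert_iff.mp hq with rfl | hq
      · rw [Function.update_self, MonoidHom.map_mul, MonoidHom.map_inv, hphi q' hq']
      · rw [Function.update_of_ne (hvA q hq) _ T]; exact hphi q hq
    · intro q hq
      rcases Set.mem_insert_iff.mp hq with rfl | hq
      · rw [Function.update_self]
        rw [xi_mul, hphi q' hq', xi_inv, xi_of, act_act, _root_.map_inv, act_of, mul_one]
        refine mul_mem (hmono _ (hxi q' hq')) (inv_mem ?_)
        exact Subgroup.subset_closure (Set.mem_image_of_mem _ (Set.mem_insert _ _))
      · rw [Function.update_of_ne (hvA q hq) _ T]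
        exact hmono _ (hxi q hq)
    · intro d hd
      rcases Set.mem_insert_iff.mp hd with rfl | hd
      · refine ⟨Set.mem_insert _ _, ?_, ?_⟩
        · rw [hvq]; exact Set.mem_insert_iff.mpr (Or.inr hq')
        · rw [hvq, Function.update_self, Function.update_of_ne hqv' _ T, inv_mul_cancel_right]
      · obtain ⟨h1, h2, h3⟩ := hDp d hd
        exact ⟨Set.mem_insert_iff.mpr (Or.inr h1), Set.mem_insert_iff.mpr (Or.inr h2),
          by rw [Function.update_of_ne (hvA _ h1) _ T, Function.update_of_ne (hvA _ h2) _ T]; exact h3⟩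
    · intro hmem
      rcases Set.mem_insert_iff.mp hmem with heq | hmem
      · apply hx
        have : fE.1 = v := by rw [heq]
        exact this ▸ hfe.1
      · exact hf hmem
    · apply Set.ncard_lt_ncard _ (Set.finite_univ.subset (Set.diff_subset))
      constructor
      · exact Set.diff_subset_diff_right (Set.subset_insert _ _)
      · intro hsub
        have hvmem : v ∈ Set.univ \ A := ⟨trivial, hx⟩
        have := hsub hvmem
        exact this.2 (Set.mem_insert _ _)

theorem GoodT.to_univ [Finite Q]
    (hφs : Function.Surjective φ) (hn : 0 < n) (hqv0 : qv 0 = 1)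
    (hfend : ∀ A : Set Q, (∀ i, i < n → qv i ∈ A) →
      fE.1 ∈ A ∧ fE.1 * φ (FreeGroup.of fE.2) ∈ A)
    {A : Set Q} {T : Q → FreeGroup X} {D : Set (Q × X)}
    (hG : GoodT φ n qv pfx fE A T D) :
    ∃ T' D', GoodT φ n qv pfx fE Set.univ T' D' := by
  classical
  obtain ⟨k, hk⟩ : ∃ k, (Set.univ \ A).ncard ≤ k := ⟨_, le_refl _⟩
  induction k generalizing A T D with
  | zero =>
      have hfin : (Set.univ \ A).Finite := Set.finite_univ.subset (Set.diff_subset)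
      have : Set.univ \ A = ∅ := by
        rw [← Set.ncard_eq_zero hfin]; omega
      have hAuniv : A = Set.univ := Set.univ_subset_iff.mp (Set.diff_eq_empty.mp this)
      exact ⟨T, D, by rwa [hAuniv] at hG⟩
  | succ k ih =>
      by_cases hA : A = Set.univ
      · exact ⟨T, D, by rwa [hA] at hG⟩
      · obtain ⟨A', T', D', hG', _, hlt⟩ := hG.step hφs hn hqv0 hfend hA
        exact ih hG' (by omega)

/-- Twist a free group by inverting one generator. -/
theorem exists_flip {B : Type*} (i₀ : B) :
    ∃ ω : FreeGroup B ≃* FreeGroup B, ω (FreeGroup.of i₀) = (FreeGroup.of i₀)⁻¹ := by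
  classical
  set h : FreeGroup B →* FreeGroup B :=
    FreeGroup.lift (fun b => if b = i₀ then (FreeGroup.of b)⁻¹ else FreeGroup.of b) with hh0
  have hcomp : h.comp h = MonoidHom.id _ := by
    apply FreeGroup.ext_hom
    intro b
    by_cases hb : b = i₀
    · subst hb
      simp [hh0]
    · simp [hh0, hb]
  refine ⟨MonoidHom.toMulEquiv h h hcomp hcomp, ?_⟩
  show h (FreeGroup.of i₀) = _
  simp [hh0]


end SchreierAux


namespace MinRelAux

open FreeGroup List

set_option linter.unusedSectionVars false
set_option linter.unusedVariables false
variable {α : Type*} [DecidableEq α]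

lemma reduced_append {L1 L2 : List (α × Bool)}
    (h : reduce (L1 ++ L2) = L1 ++ L2) :
    reduce L1 = L1 ∧ reduce L2 = L2 := by
  have hr : Red (L1 ++ L2) (reduce L1 ++ reduce L2) :=
    Red.append_append (reduce.red) (reduce.red)
  have h2 : L1 ++ L2 = reduce L1 ++ reduce L2 := by
    have := reduce.min (L₁ := L1 ++ L2) (h.symm ▸ hr)
    rwa [h] at this
  have hl1 : (reduce L1).length ≤ L1.length := Red.length_le (reduce.red)
  have hl2 : (reduce L2).length ≤ L2.length := Red.length_le (reduce.red)
  have hlen := congrArg List.length h2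
  simp only [List.length_append] at hlen
  have hL1 : L1.length = (reduce L1).length := by omega
  obtain ⟨e1, e2⟩ := List.append_inj h2 hL1
  exact ⟨e1.symm, e2.symm⟩

lemma norm_mk_reduced {L : List (α × Bool)} (h : reduce L = L) :
    norm (mk L) = L.length := by
  rw [FreeGroup.norm, toWord_mk, h]

lemma mk_singleton_true (x : α) : mk [(x, true)] = of x := rfl

lemma mk_singleton_false (x : α) : mk [(x, false)] = (of x)⁻¹ := by
  rw [← mk_singleton_true, inv_mk]
  rfl

lemma reduced_take_drop {L : List (α × Bool)} (h : reduce L = L) (i j : ℕ) (hij : i ≤ j) :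
    reduce ((L.take j).drop i) = (L.take j).drop i := by
  have h1 : reduce (L.take j) = L.take j :=
    (reduced_append (by rw [List.take_append_drop]; exact h)).1
  have h2 : L.take j = (L.take j).take i ++ (L.take j).drop i := (List.take_append_drop i _).symm
  have h3 := reduced_append (L1 := (L.take j).take i) (L2 := (L.take j).drop i)
    (by rw [← h2]; exact h1)
  exact h3.2

end MinRelAux


set_option maxHeartbeats 2000000 in
/-- Let `G ≠ 1` be a finitely generated residually finite group, `F` the free group on a
basis `X` of cardinality `rk G`, and `π : F ↠ G` with kernel `R ≠ 1`.  If `r` is a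
nontrivial element of `R` of minimal word length, then `r` belongs to a basis of a
finite-index subgroup `F₁` of `F` containing `R`. -/
theorem minimal_relator_primitive_in_finite_index_subgroup
    {G : Type*} [Group G] [Group.FG G] [Nontrivial G]
    (hres : ∀ g : G, g ≠ 1 → ∃ N : Subgroup G, N.Normal ∧ N.FiniteIndex ∧ g ∉ N)
    (X : Type*) [DecidableEq X] (hX : Nat.card X = subgroupRank (⊤ : Subgroup G))
    (π : FreeGroup X →* G) (hπ : Function.Surjective π)
    (hker : π.ker ≠ ⊥)
    (r : FreeGroup X) (hrR : r ∈ π.ker) (hr1 : r ≠ 1)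
    (hmin : ∀ s ∈ π.ker, s ≠ 1 → FreeGroup.norm r ≤ FreeGroup.norm s) :
    ∃ F₁ : Subgroup (FreeGroup X), F₁.FiniteIndex ∧ π.ker ≤ F₁ ∧
      ∃ (ι : Type) (b : FreeGroupBasis ι F₁) (i : ι), (b i : FreeGroup X) = r := by
  classical
  -- X is finite and nonempty
  have hrank0 : subgroupRank (⊤ : Subgroup G) ≠ 0 := by
    intro h0
    have hne : {m : ℕ | ∃ S : Finset G, S.card = m ∧
        Subgroup.closure (S : Set G) = (⊤ : Subgroup G)}.Nonempty := by
      obtain ⟨S, hSc, hSf⟩ := Group.fg_iff.mp ‹Group.FG G›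
      exact ⟨hSf.toFinset.card, hSf.toFinset, rfl, by rwa [Set.Finite.coe_toFinset]⟩
    have hmem := Nat.sInf_mem hne
    rw [show sInf {m : ℕ | ∃ S : Finset G, S.card = m ∧
        Subgroup.closure (S : Set G) = (⊤ : Subgroup G)}
      = subgroupRank (⊤ : Subgroup G) from rfl, h0] at hmem
    obtain ⟨S, hcard, hclos⟩ := hmem
    rw [Finset.card_eq_zero] at hcard
    subst hcard
    rw [Finset.coe_empty, Subgroup.closure_empty] at hclos
    obtain ⟨a, ha⟩ := exists_ne (1 : G)
    have : a ∈ (⊥ : Subgroup G) := hclos ▸ Subgroup.mem_top a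
    exact ha (Subgroup.mem_bot.mp this)
  have hcardX : Nat.card X ≠ 0 := by rw [hX]; exact hrank0
  rw [Nat.card_ne_zero] at hcardX
  haveI : Nonempty X := hcardX.1
  haveI : Finite X := hcardX.2
  -- word basics
  set n := FreeGroup.norm r with hn
  have hn0 : 0 < n := by
    rcases Nat.eq_zero_or_pos n with h | h
    · exact absurd (FreeGroup.norm_eq_zero.mp (hn ▸ h)) hr1
    · exact h
  set W := r.toWord with hW
  have hWlen : W.length = n := rfl
  have hWred : FreeGroup.reduce W = W := FreeGroup.reduce_toWord r
  set x₀ : X := Classical.arbitrary X with hx₀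
  set ltr : ℕ → X × Bool := fun i => W.getD i (x₀, true) with hltr
  set pfx : ℕ → FreeGroup X := fun i => FreeGroup.mk (W.take i) with hpfx
  have hpfx0 : pfx 0 = 1 := by
    rw [hpfx]; simp only [List.take_zero]; rw [← FreeGroup.one_eq_mk]
  have hpfxn : pfx n = r := by
    rw [hpfx]; simp only []
    rw [← hWlen, List.take_length, hW, FreeGroup.mk_toWord]
  have hpfx_succ : ∀ i, i < n → pfx (i + 1) = pfx i * FreeGroup.mk [ltr i] := by
    intro i hi
    have hiW : i < W.length := by omega
    have h1 : ltr i = W[i] := List.getD_eq_getElem W _ hiW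
    rw [hpfx]; simp only []
    rw [← List.take_concat_get' W i hiW, ← FreeGroup.mul_mk, h1]
  have hseg : ∀ i j, i ≤ j → (pfx i)⁻¹ * pfx j = FreeGroup.mk ((W.take j).drop i) := by
    intro i j hij
    have h2 : W.take i ++ (W.take j).drop i = W.take j := by
      conv_lhs => rw [show W.take i = (W.take j).take i by
        rw [List.take_take, min_eq_left hij]]
      exact List.take_append_drop i (W.take j)
    have h3 : pfx i * FreeGroup.mk ((W.take j).drop i) = pfx j := by
      rw [hpfx]; simp only []; rw [FreeGroup.mul_mk, h2]
    rw [← h3]; group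
  have hsegnorm : ∀ i j, i ≤ j → j ≤ n →
      FreeGroup.norm ((pfx i)⁻¹ * pfx j) = j - i := by
    intro i j hij hjn
    rw [hseg i j hij, MinRelAux.norm_mk_reduced (MinRelAux.reduced_take_drop hWred i j hij)]
    rw [List.length_drop, List.length_take]
    omega
  -- distinctness of π on prefixes
  have hπinj : ∀ i j, i < n → j < n → π (pfx i) = π (pfx j) → i = j := by
    have hcore : ∀ i j, i < j → j < n → π (pfx i) ≠ π (pfx j) := by
      intro i j hij hjn heq
      have hnorm : FreeGroup.norm ((pfx i)⁻¹ * pfx j) = j - i :=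
        hsegnorm i j (by omega) (by omega)
      have hs1 : (pfx i)⁻¹ * pfx j ≠ 1 := by
        intro h1; rw [h1, FreeGroup.norm_one] at hnorm; omega
      have hsker : (pfx i)⁻¹ * pfx j ∈ π.ker := by
        rw [MonoidHom.mem_ker, MonoidHom.map_mul, MonoidHom.map_inv, ← heq]; group
      have := hmin _ hsker hs1
      omega
    intro i j hi hj heq
    rcases lt_trichotomy i j with h | h | h
    · exact absurd heq (hcore i j h hj)
    · exact h
    · exact absurd heq.symm (hcore j i h hi)
  -- cyclic reducedness
  have hcyc : ¬(2 ≤ n ∧ ∃ y, ltr 0 = (y, true) ∧ ltr (n-1) = (y, false)) := by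
    rintro ⟨hn2, y, h0, h1⟩
    have e1 : pfx 1 = FreeGroup.of y := by
      rw [hpfx_succ 0 (by omega), hpfx0, one_mul, h0, MinRelAux.mk_singleton_true]
    have hsn : n - 1 + 1 = n := by omega
    have e2 : pfx n = pfx (n-1) * (FreeGroup.of y)⁻¹ := by
      have h3 := hpfx_succ (n-1) (by omega)
      rw [hsn, h1, MinRelAux.mk_singleton_false] at h3
      exact h3
    have hmnorm : FreeGroup.norm ((pfx 1)⁻¹ * pfx (n-1)) = n - 2 := by
      have := hsegnorm 1 (n-1) (by omega) (by omega)
      omega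
    have hrm : r = FreeGroup.of y * ((pfx 1)⁻¹ * pfx (n-1)) * (FreeGroup.of y)⁻¹ := by
      rw [← hpfxn, e2, ← e1]; group
    have hmker : (pfx 1)⁻¹ * pfx (n-1) ∈ π.ker := by
      have hm : (pfx 1)⁻¹ * pfx (n-1) = (FreeGroup.of y)⁻¹ * r * FreeGroup.of y := by
        rw [hrm]; group
      rw [hm]
      have hnormal : (π.ker).Normal := MonoidHom.normal_ker π
      have := hnormal.conj_mem r hrR (FreeGroup.of y)⁻¹
      simpa using this
    have hm1 : (pfx 1)⁻¹ * pfx (n-1) ≠ 1 := by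
      intro h2
      rw [h2, mul_one] at hrm
      exact hr1 (by rw [hrm]; group)
    have := hmin _ hmker hm1
    omega
  -- separating finite quotient
  set sg : Fin n × Fin n → FreeGroup X := fun ij => (pfx ij.1)⁻¹ * pfx ij.2 with hsg
  have hνex : ∀ ij : Fin n × Fin n, ∃ N : Subgroup G,
      N.Normal ∧ N.FiniteIndex ∧ (π (sg ij) ≠ 1 → π (sg ij) ∉ N) := by
    intro ij
    by_cases h : π (sg ij) = 1
    · exact ⟨⊤, inferInstance, inferInstance, fun h' => absurd h h'⟩
    · obtain ⟨N, h1, h2, h3⟩ := hres _ h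
      exact ⟨N, h1, h2, fun _ => h3⟩
  choose ν hν1 hν2 hν3 using hνex
  set N : Subgroup G := ⨅ ij, ν ij with hN
  haveI hNnorm : N.Normal := by
    constructor
    intro a ha g
    rw [hN, Subgroup.mem_iInf] at ha ⊢
    intro ij
    exact (hν1 ij).conj_mem a (ha ij) g
  haveI hNfin : N.FiniteIndex := by
    rw [hN]; exact Subgroup.finiteIndex_iInf hν2
  set φ : FreeGroup X →* G ⧸ N := (QuotientGroup.mk' N).comp π with hφ
  have hφs : Function.Surjective φ :=
    (QuotientGroup.mk'_surjective N).comp hπ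
  set qv : ℕ → G ⧸ N := fun i => φ (pfx i) with hqv
  have hqv0 : qv 0 = 1 := by rw [hqv]; simp only []; rw [hpfx0, map_one]
  have hπr : π r = 1 := MonoidHom.mem_ker.mp hrR
  have hqvn : qv n = 1 := by
    rw [hqv]; simp only []
    rw [hpfxn, hφ, MonoidHom.comp_apply, hπr, map_one]
  have hqvinj : ∀ i j, i < n → j < n → qv i = qv j → i = j := by
    intro i j hi hj heq
    by_contra hne
    have hfi : π (sg (⟨i, hi⟩, ⟨j, hj⟩)) ≠ 1 := by
      rw [hsg]; simp only []
      intro h1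
      rw [MonoidHom.map_mul, MonoidHom.map_inv, inv_mul_eq_one] at h1
      exact hne (hπinj i j hi hj h1)
    apply hν3 _ hfi
    have hmemN : π (sg (⟨i, hi⟩, ⟨j, hj⟩)) ∈ N := by
      rw [hsg]; simp only [MonoidHom.map_mul, MonoidHom.map_inv]
      rw [hqv] at heq
      simp only [] at heq
      have heq2 : QuotientGroup.mk' N (π (pfx i)) = QuotientGroup.mk' N (π (pfx j)) := heq
      obtain ⟨z, hz, hz2⟩ := (QuotientGroup.mk'_eq_mk' (N := N)).mp heq2
      have : (π (pfx i))⁻¹ * π (pfx j) = z := by rw [← hz2]; group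
      rw [this]; exact hz
    rw [hN, Subgroup.mem_iInf] at hmemN
    exact hmemN _
  have hKle : π.ker ≤ φ.ker := by
    intro k hk
    rw [MonoidHom.mem_ker, hφ, MonoidHom.comp_apply, MonoidHom.mem_ker.mp hk, map_one]
  have hKfin : φ.ker.FiniteIndex := by
    haveI : Finite (FreeGroup X ⧸ φ.ker) :=
      Finite.of_equiv _ (QuotientGroup.quotientKerEquivRange φ).symm.toEquiv
    exact Subgroup.finiteIndex_of_finite_quotient
  -- last letter and the distinguished edge
  set lst : X × Bool := ltr (n-1) with hlst
  have hpfx_last : pfx n = pfx (n-1) * FreeGroup.mk [lst] := by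
    have h3 := hpfx_succ (n-1) (by omega)
    rwa [show n - 1 + 1 = n by omega] at h3
  have hpos : lst.2 = true → pfx n = pfx (n-1) * FreeGroup.of lst.1 := by
    intro hb
    rw [hpfx_last, show ([lst] : List (X × Bool)) = [(lst.1, true)] by rw [← hb],
      MinRelAux.mk_singleton_true]
  have hneg : lst.2 = false → pfx n = pfx (n-1) * (FreeGroup.of lst.1)⁻¹ := by
    intro hb
    rw [hpfx_last, show ([lst] : List (X × Bool)) = [(lst.1, false)] by rw [← hb],
      MinRelAux.mk_singleton_false]
  have hqv_pos : lst.2 = true → qv (n-1) * φ (FreeGroup.of lst.1) = 1 := by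
    intro hb
    calc qv (n-1) * φ (FreeGroup.of lst.1) = φ (pfx (n-1) * FreeGroup.of lst.1) :=
          (MonoidHom.map_mul φ _ _).symm
      _ = φ (pfx n) := by rw [← hpos hb]
      _ = 1 := hqvn
  have hqv_neg : lst.2 = false → (1 : G ⧸ N) * φ (FreeGroup.of lst.1) = qv (n-1) := by
    intro hb
    rw [one_mul]
    have h2 : pfx (n-1) = pfx n * FreeGroup.of lst.1 := by rw [hneg hb]; group
    have h3 : φ (pfx n) = 1 := hqvn
    calc φ (FreeGroup.of lst.1) = φ (pfx n) * φ (FreeGroup.of lst.1) := by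
          rw [h3, one_mul]
      _ = φ (pfx n * FreeGroup.of lst.1) := (MonoidHom.map_mul φ _ _).symm
      _ = qv (n-1) := by rw [← h2]
  set fE : (G ⧸ N) × X := if lst.2 then (qv (n-1), lst.1) else (1, lst.1) with hfE
  have hfend : ∀ A : Set (G ⧸ N), (∀ i, i < n → qv i ∈ A) →
      fE.1 ∈ A ∧ fE.1 * φ (FreeGroup.of fE.2) ∈ A := by
    intro A hA
    rcases Bool.eq_false_or_eq_true lst.2 with hb | hb
    · rw [hfE, if_pos hb]
      refine ⟨hA (n-1) (by omega), ?_⟩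
      show qv (n-1) * φ (FreeGroup.of lst.1) ∈ A
      rw [hqv_pos hb]
      exact hqv0 ▸ hA 0 hn0
    · rw [hfE, if_neg (by simp [hb])]
      constructor
      · exact hqv0 ▸ hA 0 hn0
      · show (1 : G ⧸ N) * φ (FreeGroup.of lst.1) ∈ A
        rw [hqv_neg hb]; exact hA (n-1) (by omega)

  -- base triple
  set A₀ : Set (G ⧸ N) := {q | ∃ i, i < n ∧ qv i = q} with hA₀
  set T₀ : (G ⧸ N) → FreeGroup X :=
    fun q => if h : ∃ i, i < n ∧ qv i = q then pfx h.choose else 1 with hT₀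
  have hT₀qv : ∀ i, i < n → T₀ (qv i) = pfx i := by
    intro i hi
    have hex : ∃ j, j < n ∧ qv j = qv i := ⟨i, hi, rfl⟩
    rw [hT₀]; simp only []
    rw [dif_pos hex]
    have hsp := hex.choose_spec
    congr 1
    exact hqvinj _ _ hsp.1 hi hsp.2
  set edge : ℕ → (G ⧸ N) × X :=
    fun i => if (ltr i).2 then (qv i, (ltr i).1) else (qv (i+1), (ltr i).1) with hedge
  set D₀ : Set ((G ⧸ N) × X) := {d | ∃ i, i + 1 < n ∧ d = edge i} with hD₀
  have hltr_eta : ∀ i, (ltr i) = ((ltr i).1, (ltr i).2) := fun i => rfl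
  have hqv_succ_pos : ∀ i, i < n → (ltr i).2 = true →
      qv (i+1) = qv i * φ (FreeGroup.of (ltr i).1) := by
    intro i hi hb
    show φ (pfx (i+1)) = φ (pfx i) * φ (FreeGroup.of (ltr i).1)
    rw [hpfx_succ i hi, show ([ltr i] : List (X × Bool)) = [((ltr i).1, true)] by rw [← hb],
      MinRelAux.mk_singleton_true, MonoidHom.map_mul]
  have hqv_succ_neg : ∀ i, i < n → (ltr i).2 = false →
      qv (i+1) * φ (FreeGroup.of (ltr i).1) = qv i := by
    intro i hi hb
    show φ (pfx (i+1)) * φ (FreeGroup.of (ltr i).1) = φ (pfx i)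
    rw [hpfx_succ i hi, show ([ltr i] : List (X × Bool)) = [((ltr i).1, false)] by rw [← hb],
      MinRelAux.mk_singleton_false, MonoidHom.map_mul, MonoidHom.map_inv,
      inv_mul_cancel_right]
  have hbase : SchreierAux.GoodT φ n qv pfx fE A₀ T₀ D₀ := by
    have hxi_pfx : ∀ i, i < n →
        SchreierAux.xi φ (pfx i) ∈ Subgroup.closure (FreeGroup.of '' D₀) := by
      intro i
      induction i with
      | zero =>
          intro _
          rw [hpfx0, SchreierAux.xi_one]
          exact one_mem _
      | succ i ih =>
          intro hi
          have hi' : i < n := by omega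
          have hφp : φ (pfx i) = qv i := rfl
          rw [hpfx_succ i hi']
          rcases Bool.eq_false_or_eq_true (ltr i).2 with hb | hb
          · -- positive letter
            rw [show ([ltr i] : List (X × Bool)) = [((ltr i).1, true)] by rw [← hb],
              MinRelAux.mk_singleton_true, SchreierAux.xi_mul, SchreierAux.xi_of,
              SchreierAux.act_of, mul_one, hφp]
            refine mul_mem (ih hi') (Subgroup.subset_closure (Set.mem_image_of_mem _ ?_))
            rw [hD₀]
            exact ⟨i, hi, by rw [hedge]; simp only []; rw [if_pos hb]⟩
          · -- negative letter
            rw [show ([ltr i] : List (X × Bool)) = [((ltr i).1, false)] by rw [← hb],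
              MinRelAux.mk_singleton_false, SchreierAux.xi_mul, SchreierAux.xi_inv,
              SchreierAux.xi_of, SchreierAux.act_act, _root_.map_inv, SchreierAux.act_of,
              mul_one, hφp]
            have hv : qv i * (φ (FreeGroup.of (ltr i).1))⁻¹ = qv (i+1) := by
              rw [← hqv_succ_neg i hi' hb, mul_inv_cancel_right]
            rw [hv]
            refine mul_mem (ih hi') (inv_mem (Subgroup.subset_closure
              (Set.mem_image_of_mem _ ?_)))
            rw [hD₀]
            exact ⟨i, hi, by rw [hedge]; simp only []; rw [if_neg (by simp [hb])]⟩
    refine ⟨?_, ?_, hT₀qv, ?_, ?_, ?_, ?_⟩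
    · intro i hi; exact ⟨i, hi, rfl⟩
    · have h4 := hT₀qv 0 hn0
      rw [hqv0] at h4
      exact h4.trans hpfx0
    · rintro q ⟨i, hi, rfl⟩
      rw [hT₀qv i hi]
    · rintro q ⟨i, hi, rfl⟩
      rw [hT₀qv i hi]; exact hxi_pfx i hi
    · rintro d ⟨i, hi1, rfl⟩
      rcases Bool.eq_false_or_eq_true (ltr i).2 with hb | hb
      · -- positive edge  (qv i, x)
        rw [hedge]; simp only []; rw [if_pos hb]
        refine ⟨⟨i, by omega, rfl⟩, ?_, ?_⟩
        · show qv i * φ (FreeGroup.of (ltr i).1) ∈ A₀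
          rw [← hqv_succ_pos i (by omega) hb]
          exact ⟨i+1, by omega, rfl⟩
        · show T₀ (qv i) * FreeGroup.of (ltr i).1 = T₀ (qv i * φ (FreeGroup.of (ltr i).1))
          rw [← hqv_succ_pos i (by omega) hb, hT₀qv i (by omega), hT₀qv (i+1) (by omega),
            hpfx_succ i (by omega),
            show ([ltr i] : List (X × Bool)) = [((ltr i).1, true)] by rw [← hb],
            MinRelAux.mk_singleton_true]
      · -- negative edge (qv (i+1), x)
        rw [hedge]; simp only []; rw [if_neg (by simp [hb])]
        refine ⟨⟨i+1, by omega, rfl⟩, ?_, ?_⟩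
        · show qv (i+1) * φ (FreeGroup.of (ltr i).1) ∈ A₀
          rw [hqv_succ_neg i (by omega) hb]
          exact ⟨i, by omega, rfl⟩
        · show T₀ (qv (i+1)) * FreeGroup.of (ltr i).1
            = T₀ (qv (i+1) * φ (FreeGroup.of (ltr i).1))
          rw [hqv_succ_neg i (by omega) hb, hT₀qv (i+1) (by omega), hT₀qv i (by omega),
            hpfx_succ i (by omega),
            show ([ltr i] : List (X × Bool)) = [((ltr i).1, false)] by rw [← hb],
            MinRelAux.mk_singleton_false, inv_mul_cancel_right]
    · -- fE is not a base tree edge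
      rintro ⟨i, hi1, hfeq⟩
      rcases Bool.eq_false_or_eq_true lst.2 with hbl | hbl
      · -- fE = (qv (n-1), lst.1)
        rw [hfE, if_pos hbl] at hfeq
        rcases Bool.eq_false_or_eq_true (ltr i).2 with hb | hb
        · -- edge i = (qv i, _)
          simp only [hedge] at hfeq
          rw [if_pos hb] at hfeq
          have h1 : qv (n-1) = qv i := congrArg Prod.fst hfeq
          have := hqvinj (n-1) i (by omega) (by omega) h1
          omega
        · -- edge i = (qv (i+1), _): adjacent cancellation, contradicting reducedness
          simp only [hedge] at hfeq
          rw [if_neg (by simp [hb])] at hfeq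
          have h1 : qv (n-1) = qv (i+1) := congrArg Prod.fst hfeq
          have h2 : lst.1 = (ltr i).1 := congrArg Prod.snd hfeq
          have hieq : i + 1 = n - 1 := (hqvinj (n-1) (i+1) (by omega) (by omega) h1).symm
          have hin2 : i = n - 2 := by omega
          have hnn : 2 ≤ n := by omega
          -- pfx n = pfx i  but their "distance" is 2
          have e3 : pfx (i+1) = pfx i * (FreeGroup.of lst.1)⁻¹ := by
            rw [hpfx_succ i (by omega),
              show ([ltr i] : List (X × Bool)) = [((ltr i).1, false)] by rw [← hb],
              MinRelAux.mk_singleton_false, h2]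
          have e4 : pfx n = pfx (i+1) * FreeGroup.of lst.1 := by
            have := hpos hbl
            rw [show i + 1 = n - 1 by omega]
            exact this
          have e5 : (pfx i)⁻¹ * pfx n = 1 := by
            rw [e4, e3]; group
          have e6 : FreeGroup.norm ((pfx i)⁻¹ * pfx n) = n - i := by
            exact hsegnorm i n (by omega) (by omega)
          rw [e5, FreeGroup.norm_one] at e6
          omega
      · -- fE = (1, lst.1)
        rw [hfE, if_neg (by simp [hbl])] at hfeq
        rcases Bool.eq_false_or_eq_true (ltr i).2 with hb | hb
        · -- edge i = (qv i, _): i = 0, contradict cyclic reducedness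
          simp only [hedge] at hfeq
          rw [if_pos hb] at hfeq
          have h1 : (1 : G ⧸ N) = qv i := congrArg Prod.fst hfeq
          have h2 : lst.1 = (ltr i).1 := congrArg Prod.snd hfeq
          have hi0 : 0 = i := hqvinj 0 i (by omega) (by omega) (by rw [hqv0, ← h1])
          apply hcyc
          refine ⟨by omega, lst.1, ?_, ?_⟩
          · rw [show i = 0 from hi0.symm] at h2 hb
            exact Prod.ext h2.symm hb
          · show lst = (lst.1, false)
            exact Prod.ext rfl hbl
        · -- edge i = (qv (i+1), _): impossible since qv (i+1) = qv 0 forces i+1 = 0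
          simp only [hedge] at hfeq
          rw [if_neg (by simp [hb])] at hfeq
          have h1 : (1 : G ⧸ N) = qv (i+1) := congrArg Prod.fst hfeq
          have := hqvinj 0 (i+1) (by omega) (by omega) (by rw [hqv0, ← h1])
          omega
  -- extend the tree to all of the quotient
  obtain ⟨T, D, hGood⟩ := hbase.to_univ hφs hn0 hqv0 hfend
  obtain ⟨hGA, hGT1, hGTp, hGphi, hGxi, hGD, hGf⟩ := hGood
  obtain ⟨e, he⟩ := SchreierAux.exists_mulEquiv_ker φ T D hGT1
    (fun q => hGphi q trivial) (fun d hd => (hGD d hd).2.2) (fun q => hGxi q trivial)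
  -- value of the Schreier generator at the distinguished edge
  have hgam : SchreierAux.gam φ T fE = r ∨ SchreierAux.gam φ T fE = r⁻¹ := by
    rcases Bool.eq_false_or_eq_true lst.2 with hbl | hbl
    · left
      rw [hfE, if_pos hbl, SchreierAux.gam]
      show T (qv (n-1)) * FreeGroup.of lst.1 * (T (qv (n-1) * φ (FreeGroup.of lst.1)))⁻¹ = r
      rw [hGTp (n-1) (by omega), hqv_pos hbl, hGT1, inv_one, mul_one, ← hpos hbl, hpfxn]
    · right
      rw [hfE, if_neg (by simp [hbl]), SchreierAux.gam]
      show T 1 * FreeGroup.of lst.1 * (T ((1 : G ⧸ N) * φ (FreeGroup.of lst.1)))⁻¹ = r⁻¹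
      rw [hGT1, one_mul, hqv_neg hbl, hGTp (n-1) (by omega)]
      have h2 : pfx (n-1) = r * FreeGroup.of lst.1 := by
        rw [← hpfxn, hneg hbl]; group
      rw [h2]; group
  -- a free-group equivalence sending a designated generator exactly to r
  have hmain : ∃ e' : FreeGroup {d : (G ⧸ N) × X // d ∉ D} ≃* φ.ker,
      ((e' (FreeGroup.of ⟨fE, hGf⟩) : φ.ker) : FreeGroup X) = r := by
    rcases hgam with hg | hg
    · exact ⟨e, by rw [he fE hGf, hg]⟩
    · obtain ⟨ω, hω⟩ := SchreierAux.exists_flip (⟨fE, hGf⟩ : {d : (G ⧸ N) × X // d ∉ D})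
      refine ⟨ω.trans e, ?_⟩
      rw [MulEquiv.trans_apply, hω, map_inv]
      have : ((e (FreeGroup.of ⟨fE, hGf⟩))⁻¹ : φ.ker) = ((e (FreeGroup.of ⟨fE, hGf⟩) : φ.ker) : FreeGroup X)⁻¹ := rfl
      rw [this, he fE hGf, hg, inv_inv]
  obtain ⟨e', he'⟩ := hmain
  haveI : Finite {d : (G ⧸ N) × X // d ∉ D} := Subtype.finite
  obtain ⟨m, ⟨eqv⟩⟩ := Finite.exists_equiv_fin {d : (G ⧸ N) × X // d ∉ D}
  set E : FreeGroup (Fin m) ≃* φ.ker :=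
    (FreeGroup.freeGroupCongr eqv.symm).trans e' with hE
  refine ⟨φ.ker, hKfin, hKle, Fin m, FreeGroupBasis.ofRepr E.symm, eqv ⟨fE, hGf⟩, ?_⟩
  have hb1 : (FreeGroupBasis.ofRepr E.symm) (eqv ⟨fE, hGf⟩)
      = E (FreeGroup.of (eqv ⟨fE, hGf⟩)) := by
    show E.symm.symm _ = _
    rw [MulEquiv.symm_symm]
  rw [hb1, hE, MulEquiv.trans_apply]
  have hb2 : (FreeGroup.freeGroupCongr eqv.symm) (FreeGroup.of (eqv ⟨fE, hGf⟩))
      = FreeGroup.of ⟨fE, hGf⟩ := by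
    simp [FreeGroup.freeGroupCongr]
  rw [hb2, he']
end

section
/- Let G be a finitely generated, residually finite group that is not free. Then the function rk − 1 is not multiplicative on G: there exists a normal subgroup G₁ of finite index in G with rk(G₁) − 1 < [G : G₁] · (rk(G) − 1); in fact there exists such a G₁ generated by at most (rk(G) − 1) · [G : G₁] elements. -/
namespace SchreierAux


open FreeGroup List

variable {α : Type*} [DecidableEq α]

/-- The no-cancellation relation between adjacent letters of a reduced word. -/
def Rel (a b : α × Bool) : Prop := ¬(a.1 = b.1 ∧ a.2 = !b.2)

theorem chain'_reduce (L : List (α × Bool)) : List.Chain' Rel (FreeGroup.reduce L) := by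
  induction L with
  | nil => simp [FreeGroup.reduce]; exact List.isChain_nil
  | cons x L ih =>
    rw [FreeGroup.reduce.cons]
    rcases h : FreeGroup.reduce L with _ | ⟨y, t⟩
    · simp; exact List.isChain_singleton x
    · rw [h] at ih
      by_cases hc : x.1 = y.1 ∧ x.2 = !y.2
      · simp only [if_pos hc]
        exact ih.tail
      · simp only [if_neg hc]
        exact List.IsChain.cons_cons hc ih

theorem reduce_eq_self_of_chain' {L : List (α × Bool)} (h : List.Chain' Rel L) :
    FreeGroup.reduce L = L := by
  induction L with
  | nil => simp [FreeGroup.reduce]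
  | cons x L ih =>
    rw [FreeGroup.reduce.cons, ih h.tail]
    rcases L with _ | ⟨y, t⟩
    · rfl
    · have : Rel x y := List.isChain_cons_cons.1 h |>.1
      simp only [if_neg this]

theorem chain'_toWord (x : FreeGroup α) : List.Chain' Rel x.toWord := by
  rw [← FreeGroup.reduce_toWord]
  exact chain'_reduce _

theorem toWord_mk_of_chain' {L : List (α × Bool)} (h : List.Chain' Rel L) :
    (FreeGroup.mk L).toWord = L := by
  rw [FreeGroup.toWord_mk, reduce_eq_self_of_chain' h]

theorem mk_ne_one_of_chain' {L : List (α × Bool)} (h : List.Chain' Rel L) (hne : L ≠ []) :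
    FreeGroup.mk L ≠ 1 := by
  intro hone
  rw [← FreeGroup.toWord_eq_nil_iff, toWord_mk_of_chain' h] at hone
  exact hne hone


open Subgroup

variable {G : Type*} [Group G] (G₁ : Subgroup G) [G₁.Normal] (S C : Finset G)

/-- Cosets reachable from the cosets of `C` in at most `m` right-multiplication steps
by generators in `S` or their inverses. -/
def reach : ℕ → Set (G ⧸ G₁)
  | 0 => QuotientGroup.mk '' (C : Set G)
  | (m + 1) => reach m ∪ {c | ∃ c' ∈ reach m, ∃ s ∈ S,
      c = c' * QuotientGroup.mk s ∨ c = c' * (QuotientGroup.mk s)⁻¹}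

theorem reach_cover (hS : closure (S : Set G) = ⊤) (h1 : (1 : G) ∈ C) (c : G ⧸ G₁) :
    ∃ m, c ∈ reach G₁ S C m := by
  obtain ⟨g, rfl⟩ := QuotientGroup.mk_surjective c
  have hg : g ∈ Submonoid.closure ((S : Set G) ∪ (S : Set G)⁻¹) := by
    rw [← Subgroup.closure_toSubmonoid, hS]; trivial
  obtain ⟨l, hl, rfl⟩ := Submonoid.exists_list_of_mem_closure hg
  clear hg
  induction l using List.reverseRecOn with
  | nil =>
    exact ⟨0, ⟨1, h1, by simp⟩⟩
  | append_singleton l x ih =>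
    obtain ⟨m, hm⟩ := ih (fun y hy => hl y (List.mem_append_left _ hy))
    have hx := hl x (List.mem_append_right _ (List.mem_singleton_self x))
    rw [List.prod_append, List.prod_singleton]
    rcases hx with hx | hx
    · exact ⟨m + 1, Or.inr ⟨_, hm, x, hx, Or.inl (by rw [QuotientGroup.mk_mul])⟩⟩
    · have hxS : x⁻¹ ∈ S := by simpa [Set.mem_inv] using hx
      obtain ⟨s, hs, rfl⟩ : ∃ s ∈ S, s⁻¹ = x := ⟨x⁻¹, hxS, by simp⟩
      exact ⟨m + 1, Or.inr ⟨_, hm, s, hs, Or.inr (by rw [QuotientGroup.mk_mul]; simp)⟩⟩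

open scoped Classical in
/-- Build coset representatives by induction on the distance to `C`. -/
noncomputable def buildRep (d : G ⧸ G₁ → ℕ) : ℕ → G ⧸ G₁ → G :=
  Nat.rec
    (fun c => if h : ∃ x ∈ (C : Set G), QuotientGroup.mk x = c then h.choose else 1)
    (fun m ih c =>
      if d c ≤ m then ih c
      else if h : ∃ p : G × Bool, p.1 ∈ S ∧
          d (c * cond p.2 (QuotientGroup.mk p.1)⁻¹ (QuotientGroup.mk p.1)) ≤ m then
        ih (c * cond h.choose.2 (QuotientGroup.mk h.choose.1)⁻¹ (QuotientGroup.mk h.choose.1)) *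
          cond h.choose.2 h.choose.1 h.choose.1⁻¹
      else 1)

open scoped Classical in
theorem buildRep_zero (d : G ⧸ G₁ → ℕ) (c : G ⧸ G₁) :
    buildRep G₁ S C d 0 c =
      if h : ∃ x ∈ (C : Set G), QuotientGroup.mk x = c then h.choose else 1 := rfl

open scoped Classical in
theorem buildRep_succ (d : G ⧸ G₁ → ℕ) (m : ℕ) (c : G ⧸ G₁) :
    buildRep G₁ S C d (m + 1) c =
      if d c ≤ m then buildRep G₁ S C d m c
      else if h : ∃ p : G × Bool, p.1 ∈ S ∧
          d (c * cond p.2 (QuotientGroup.mk p.1)⁻¹ (QuotientGroup.mk p.1)) ≤ m then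
        buildRep G₁ S C d m
            (c * cond h.choose.2 (QuotientGroup.mk h.choose.1)⁻¹ (QuotientGroup.mk h.choose.1)) *
          cond h.choose.2 h.choose.1 h.choose.1⁻¹
      else 1 := rfl

variable {G₁ S C}
variable {d : G ⧸ G₁ → ℕ} (hd1 : ∀ c, c ∈ reach G₁ S C (d c))
  (hd2 : ∀ c m, c ∈ reach G₁ S C m → d c ≤ m)

theorem buildRep_stable {c : G ⧸ G₁} {m m' : ℕ} (h : d c ≤ m) (h' : m ≤ m') :
    buildRep G₁ S C d m' c = buildRep G₁ S C d m c := by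
  induction m' with
  | zero => rw [Nat.le_zero.1 h']
  | succ m' ih =>
    rcases Nat.lt_or_ge m (m' + 1) with h'' | h''
    · have hle : m ≤ m' := Nat.lt_succ_iff.1 h''
      rw [buildRep_succ, if_pos (h.trans hle), ih hle]
    · rw [Nat.le_antisymm h' h'']

include hd1 hd2 in
theorem buildRep_parent_exists {c : G ⧸ G₁} {m : ℕ} (h : d c = m + 1) :
    ∃ p : G × Bool, p.1 ∈ S ∧
      d (c * cond p.2 (QuotientGroup.mk p.1)⁻¹ (QuotientGroup.mk p.1)) ≤ m := by
  have h1 := hd1 c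
  rw [h] at h1
  have h2 : c ∉ reach G₁ S C m := fun hc => by have := hd2 c m hc; omega
  rcases h1 with h1 | ⟨c', hc', s, hs, rfl | rfl⟩
  · exact absurd h1 h2
  · exact ⟨(s, true), hs, by simpa using hd2 _ _ hc'⟩
  · exact ⟨(s, false), hs, by simpa using hd2 _ _ hc'⟩

include hd1 hd2 in
theorem buildRep_section {m : ℕ} : ∀ {c : G ⧸ G₁}, d c ≤ m →
    QuotientGroup.mk (buildRep G₁ S C d m c) = c ∧
      (d c = 0 → buildRep G₁ S C d m c ∈ C) := by
  induction m with
  | zero =>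
    intro c hc
    have h0 : c ∈ QuotientGroup.mk '' (C : Set G) := by
      have := hd1 c
      rwa [Nat.le_zero.1 hc] at this
    have hex : ∃ x ∈ (C : Set G), QuotientGroup.mk x = c := h0
    rw [buildRep_zero, dif_pos hex]
    exact ⟨hex.choose_spec.2, fun _ => hex.choose_spec.1⟩
  | succ m ih =>
    intro c hc
    rcases Nat.lt_or_ge m (d c) with h' | h'
    · have hdc : d c = m + 1 := Nat.le_antisymm hc h'
      have hex := buildRep_parent_exists hd1 hd2 hdc
      rw [buildRep_succ, if_neg (by omega), dif_pos hex]
      obtain ⟨hS, hdle⟩ := hex.choose_spec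
      refine ⟨?_, fun h0 => by omega⟩
      rw [QuotientGroup.mk_mul, (ih hdle).1]
      cases hb : hex.choose.2 <;> simp [hb]
    · rw [buildRep_succ, if_pos h']
      exact ih h'

variable (S C) in
/-- The representative of a coset. -/
noncomputable def repFn (d : G ⧸ G₁ → ℕ) (c : G ⧸ G₁) : G := buildRep G₁ S C d (d c) c

include hd1 hd2 in
theorem repFn_section (c : G ⧸ G₁) : QuotientGroup.mk (repFn S C d c) = c :=
  (buildRep_section hd1 hd2 le_rfl).1

include hd1 hd2 in
theorem repFn_mem_C {c : G ⧸ G₁} (h : d c = 0) : repFn S C d c ∈ C :=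
  (buildRep_section hd1 hd2 le_rfl).2 h

include hd1 hd2 in
theorem repFn_parent {c : G ⧸ G₁} (h : 0 < d c) :
    ∃ s b, s ∈ S ∧ d (c * cond b (QuotientGroup.mk s)⁻¹ (QuotientGroup.mk s)) < d c ∧
      repFn S C d c =
        repFn S C d (c * cond b (QuotientGroup.mk s)⁻¹ (QuotientGroup.mk s)) * cond b s s⁻¹ := by
  obtain ⟨m, hm⟩ : ∃ m, d c = m + 1 := ⟨d c - 1, by omega⟩
  have hex := buildRep_parent_exists hd1 hd2 hm
  obtain ⟨hS, hdle⟩ := hex.choose_spec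
  refine ⟨hex.choose.1, hex.choose.2, hS, by omega, ?_⟩
  rw [repFn, hm, buildRep_succ, if_neg (by omega), dif_pos hex, repFn,
    buildRep_stable le_rfl hdle]

open Subgroup

theorem exists_small_generating_finset {G : Type*} [Group G] (G₁ : Subgroup G)
    [hN : G₁.Normal] [hFI : G₁.FiniteIndex]
    (S : Finset G) (hS : closure (S : Set G) = ⊤)
    (C : Finset G) (hC1 : (1 : G) ∈ C)
    (hCdist : ∀ x ∈ C, ∀ y ∈ C, (QuotientGroup.mk x : G ⧸ G₁) = QuotientGroup.mk y → x = y)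
    (ν : G → G × G) (hνinj : Set.InjOn ν C)
    (hνspec : ∀ x ∈ C, (ν x).1 ∈ C ∧ (ν x).2 ∈ S ∧ (ν x).1 * (ν x).2 ∈ C) :
    ∃ T : Finset G, T.card + G₁.index ≤ S.card * G₁.index ∧
      Subgroup.closure (T : Set G) = G₁ := by
  classical
  haveI : Fintype (G ⧸ G₁) := Fintype.ofFinite _
  have hcov : ∀ c : G ⧸ G₁, ∃ m, c ∈ reach G₁ S C m := reach_cover G₁ S C hS hC1
  set d : G ⧸ G₁ → ℕ := fun c => Nat.find (hcov c) with hd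
  have hd1 : ∀ c, c ∈ reach G₁ S C (d c) := fun c => Nat.find_spec (hcov c)
  have hd2 : ∀ c m, c ∈ reach G₁ S C m → d c ≤ m := fun c m hm => Nat.find_le hm
  set ρ : G ⧸ G₁ → G := repFn S C d with hρ
  have hsec : ∀ c, QuotientGroup.mk (ρ c) = c := repFn_section hd1 hd2
  have hmemC : ∀ c, d c = 0 → ρ c ∈ C := fun c h => repFn_mem_C hd1 hd2 h
  have hd0 : ∀ x ∈ C, d (QuotientGroup.mk x) = 0 := fun x hx =>
    Nat.le_zero.1 (hd2 _ 0 ⟨x, hx, rfl⟩)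
  have hρC : ∀ x ∈ C, ρ (QuotientGroup.mk x) = x := fun x hx =>
    hCdist _ (hmemC _ (hd0 x hx)) _ hx (by rw [hsec])
  have hρρ : ∀ c, ρ (QuotientGroup.mk (ρ c)) = ρ c := fun c => by rw [hsec]
  -- the Schreier generator associated to a pair
  set F : (G ⧸ G₁) × G → G :=
    fun p => ρ p.1 * p.2 * (ρ (QuotientGroup.mk (ρ p.1 * p.2)))⁻¹ with hF
  have hFmem : ∀ p, F p ∈ G₁ := by
    intro p
    have h1 : (ρ (QuotientGroup.mk (ρ p.1 * p.2)))⁻¹ * (ρ p.1 * p.2) ∈ G₁ := by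
      rw [← QuotientGroup.eq, hsec]
    have := hN.conj_mem _ h1 (ρ p.1 * p.2)
    simpa [hF, mul_assoc] using this
  set T : Finset G :=
    ((Finset.univ ×ˢ S).filter fun p => F p ≠ 1).image F with hT
  have hFT : ∀ c s, s ∈ S → F (c, s) ∈ closure (T : Set G) := by
    intro c s hs
    by_cases h1 : F (c, s) = 1
    · rw [h1]; exact one_mem _
    · exact subset_closure (Finset.mem_coe.2 (Finset.mem_image.2
        ⟨(c, s), Finset.mem_filter.2 ⟨Finset.mem_product.2 ⟨Finset.mem_univ _, hs⟩, h1⟩, rfl⟩))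
  have hTsub : closure (T : Set G) ≤ G₁ := by
    rw [closure_le]
    intro x hx
    obtain ⟨p, _, rfl⟩ := Finset.mem_image.1 (Finset.mem_coe.1 hx)
    exact hFmem p
  have main : ∀ g : G, ∀ c : G ⧸ G₁,
      ρ c * g * (ρ (QuotientGroup.mk (ρ c * g)))⁻¹ ∈ closure (T : Set G) := by
    intro g
    have hg : g ∈ closure (S : Set G) := by rw [hS]; trivial
    induction hg using Subgroup.closure_induction with
    | mem x hx => exact fun c => hFT c x hx
    | one =>
      intro c
      rw [mul_one, hρρ c]
      simp only [mul_inv_cancel]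
      exact one_mem _
    | mul x y hx hy ihx ihy =>
      intro c
      have key : (QuotientGroup.mk (ρ (QuotientGroup.mk (ρ c * x)) * y) : G ⧸ G₁) =
          QuotientGroup.mk (ρ c * x * y) := by
        rw [QuotientGroup.mk_mul, hsec, ← QuotientGroup.mk_mul]
      have e : ρ c * (x * y) * (ρ (QuotientGroup.mk (ρ c * (x * y))))⁻¹ =
          (ρ c * x * (ρ (QuotientGroup.mk (ρ c * x)))⁻¹) *
            (ρ (QuotientGroup.mk (ρ c * x)) * y *
              (ρ (QuotientGroup.mk (ρ (QuotientGroup.mk (ρ c * x)) * y)))⁻¹) := by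
        rw [key, ← mul_assoc]
        group
      rw [e]
      exact mul_mem (ihx c) (ihy _)
    | inv x hx ih =>
      intro c
      have key : (QuotientGroup.mk (ρ (QuotientGroup.mk (ρ c * x⁻¹)) * x) : G ⧸ G₁) = c := by
        rw [QuotientGroup.mk_mul, hsec, ← QuotientGroup.mk_mul, inv_mul_cancel_right, hsec]
      have h2 := inv_mem (ih (QuotientGroup.mk (ρ c * x⁻¹)))
      rw [key] at h2
      have e : ρ c * x⁻¹ * (ρ (QuotientGroup.mk (ρ c * x⁻¹)))⁻¹ =
          (ρ (QuotientGroup.mk (ρ c * x⁻¹)) * x * (ρ c)⁻¹)⁻¹ := by group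
      rw [e]
      exact h2
  have hG₁le : G₁ ≤ closure (T : Set G) := by
    intro h hh
    have h1 := main h (QuotientGroup.mk (1 : G))
    have e1 : ρ (QuotientGroup.mk (1 : G)) = 1 := hρC 1 hC1
    have e2 : (QuotientGroup.mk (1 * h) : G ⧸ G₁) = QuotientGroup.mk (1 : G) := by
      rw [one_mul]
      exact (QuotientGroup.eq).2 (by simpa using inv_mem hh)
    rw [e1, e2, e1] at h1
    simpa using h1
  have hclosure : closure (T : Set G) = G₁ := le_antisymm hTsub hG₁le
  -- counting: build an injection from the cosets into the trivial Schreier pairs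
  have hpos : ∀ c : G ⧸ G₁, ¬(d c = 0) → 0 < d c := fun c h => Nat.pos_of_ne_zero h
  choose sfn bfn hsfnS hdlt hrep using fun (c : G ⧸ G₁) (h : 0 < d c) =>
    repFn_parent hd1 hd2 h
  simp only [← hρ] at hrep
  set π : G ⧸ G₁ → (G ⧸ G₁) × G := fun c =>
    if h : d c = 0 then (QuotientGroup.mk ((ν (ρ c)).1), (ν (ρ c)).2)
    else (cond (bfn c (hpos c h)) (c * (QuotientGroup.mk (sfn c (hpos c h)))⁻¹) c,
      sfn c (hpos c h)) with hπ
  have hπS : ∀ c, (π c).2 ∈ S := by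
    intro c
    by_cases h : d c = 0
    · simp only [hπ, dif_pos h]
      exact (hνspec _ (hmemC c h)).2.1
    · simp only [hπ, dif_neg h]
      exact hsfnS c (hpos c h)
  have hπtriv : ∀ c, F (π c) = 1 := by
    intro c
    by_cases h : d c = 0
    · simp only [hπ, dif_pos h, hF]
      obtain ⟨ha, hsS, has⟩ := hνspec _ (hmemC c h)
      rw [hρC _ ha, hρC _ has]
      group
    · simp only [hπ, dif_neg h, hF]
      rcases hb : bfn c (hpos c h) with _ | _
      · -- bfn = false : ρ c = ρ c' * s⁻¹ with c' = c * ⟦s⟧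
        have hrepc := hrep c (hpos c h)
        rw [hb] at hrepc
        simp only [cond_false] at hrepc
        simp only [cond_false]
        have e : ρ (c * QuotientGroup.mk (sfn c (hpos c h))) = ρ c * sfn c (hpos c h) := by
          rw [hrepc]; group
        rw [← e, hρρ, e]
        group
      · -- bfn = true : ρ c = ρ c' * s with c' = c * ⟦s⟧⁻¹
        have hrepc := hrep c (hpos c h)
        rw [hb] at hrepc
        simp only [cond_true] at hrepc
        simp only [cond_true]
        rw [← hrepc, hρρ]
        group
  -- endpoints of a pair, used to prove injectivity
  set E : (G ⧸ G₁) × G → (G ⧸ G₁) × (G ⧸ G₁) :=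
    fun p => (p.1, QuotientGroup.mk (ρ p.1 * p.2)) with hE
  have hE0 : ∀ c, d c = 0 → d (E (π c)).1 = 0 ∧ d (E (π c)).2 = 0 := by
    intro c h
    obtain ⟨ha, hsS, has⟩ := hνspec _ (hmemC c h)
    simp only [hπ, dif_pos h, hE]
    constructor
    · exact hd0 _ ha
    · rw [hρC _ ha]
      exact hd0 _ has
  have hEpar : ∀ c (h : ¬(d c = 0)),
      cond (bfn c (hpos c h)) ((E (π c)).2 = c) ((E (π c)).1 = c ∧
        (E (π c)).2 = c * QuotientGroup.mk (sfn c (hpos c h))) := by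
    intro c h
    rcases hb : bfn c (hpos c h) with _ | _
    · have hrepc := hrep c (hpos c h)
      rw [hb] at hrepc
      simp only [cond_false] at hrepc ⊢
      refine ⟨by simp [hπ, dif_neg h, hb, hE], ?_⟩
      show (QuotientGroup.mk (ρ (π c).1 * (π c).2) : G ⧸ G₁) = _
      simp only [hπ, dif_neg h, hb, cond_false]
      rw [QuotientGroup.mk_mul, hsec]
    · have hrepc := hrep c (hpos c h)
      rw [hb] at hrepc
      simp only [cond_true] at hrepc ⊢
      show (QuotientGroup.mk (ρ (π c).1 * (π c).2) : G ⧸ G₁) = _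
      simp only [hπ, dif_neg h, hb, cond_true]
      rw [← hrepc, hsec]
  have hπzero : ∀ c, d c = 0 → π c = (QuotientGroup.mk ((ν (ρ c)).1), (ν (ρ c)).2) :=
    fun c h => by simp [hπ, dif_pos h]
  have hπinj : Function.Injective π := by
    have key0 : ∀ c c', d c = 0 → ¬(d c' = 0) → π c ≠ π c' := by
      intro c c' h h' hcc
      have hEc := hE0 c h
      have hE' := hEpar c' h'
      rcases hb : bfn c' (hpos c' h') with _ | _
      · rw [hb] at hE'
        simp only [cond_false] at hE'
        have h2 : (E (π c)).1 = c' := by rw [hcc]; exact hE'.1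
        rw [h2] at hEc
        exact h' hEc.1
      · rw [hb] at hE'
        simp only [cond_true] at hE'
        have h2 : (E (π c)).2 = c' := by rw [hcc]; exact hE'
        rw [h2] at hEc
        exact h' hEc.2
    intro c c' hcc
    by_cases h : d c = 0 <;> by_cases h' : d c' = 0
    · -- both in the cycle
      rw [hπzero c h, hπzero c' h', Prod.mk.injEq] at hcc
      have ha := (hνspec _ (hmemC c h)).1
      have ha' := (hνspec _ (hmemC c' h')).1
      have e1 : (ν (ρ c)).1 = (ν (ρ c')).1 := hCdist _ ha _ ha' hcc.1
      have e2 : ν (ρ c) = ν (ρ c') := Prod.ext e1 hcc.2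
      have e3 : ρ c = ρ c' := hνinj (hmemC c h) (hmemC c' h') e2
      rw [← hsec c, ← hsec c', e3]
    · exact absurd hcc (key0 c c' h h')
    · exact absurd hcc.symm (key0 c' c h' h)
    · -- both in the forest
      have hE' := hEpar c' h'
      have hEc := hEpar c h
      have hEeq : E (π c) = E (π c') := by rw [hcc]
      rcases hb : bfn c (hpos c h) with _ | _ <;>
        rcases hb' : bfn c' (hpos c' h') with _ | _
      · -- both false: first endpoints are c and c'
        rw [hb] at hEc; rw [hb'] at hE'
        simp only [cond_false] at hEc hE'
        rw [← hEc.1, ← hE'.1]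
        exact congrArg (fun p => (E p).1) hcc
      · -- c false, c' true
        exfalso
        rw [hb] at hEc; rw [hb'] at hE'
        simp only [cond_false] at hEc
        simp only [cond_true] at hE'
        have e1 : c * QuotientGroup.mk (sfn c (hpos c h)) = c' := by
          rw [← hEc.2, hcc, hE']
        have e2 : (π c').1 = c' * (QuotientGroup.mk (sfn c' (hpos c' h')))⁻¹ := by
          simp [hπ, dif_neg h', hb']
        have e3 : (π c).1 = c := by simp [hπ, dif_neg h, hb]
        have e4 : c = c' * (QuotientGroup.mk (sfn c' (hpos c' h')))⁻¹ := by
          rw [← e3, ← e2, hcc]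
        have d1 : d (c * QuotientGroup.mk (sfn c (hpos c h))) < d c := by
          have := hdlt c (hpos c h); rwa [hb, cond_false] at this
        have d2 : d (c' * (QuotientGroup.mk (sfn c' (hpos c' h')))⁻¹) < d c' := by
          have := hdlt c' (hpos c' h'); rwa [hb', cond_true] at this
        rw [e1] at d1
        rw [← e4] at d2
        omega
      · -- c true, c' false
        exfalso
        rw [hb] at hEc; rw [hb'] at hE'
        simp only [cond_true] at hEc
        simp only [cond_false] at hE'
        have e1 : c' * QuotientGroup.mk (sfn c' (hpos c' h')) = c := by
          rw [← hE'.2, ← hcc, hEc]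
        have e2 : (π c).1 = c * (QuotientGroup.mk (sfn c (hpos c h)))⁻¹ := by
          simp [hπ, dif_neg h, hb]
        have e3 : (π c').1 = c' := by simp [hπ, dif_neg h', hb']
        have e4 : c' = c * (QuotientGroup.mk (sfn c (hpos c h)))⁻¹ := by
          rw [← e3, ← e2, hcc]
        have d1 : d (c' * QuotientGroup.mk (sfn c' (hpos c' h'))) < d c' := by
          have := hdlt c' (hpos c' h'); rwa [hb', cond_false] at this
        have d2 : d (c * (QuotientGroup.mk (sfn c (hpos c h)))⁻¹) < d c := by
          have := hdlt c (hpos c h); rwa [hb, cond_true] at this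
        rw [e1] at d1
        rw [← e4] at d2
        omega
      · -- both true: second endpoints are c and c'
        rw [hb] at hEc; rw [hb'] at hE'
        simp only [cond_true] at hEc hE'
        rw [← hEc, ← hE', hcc]
  -- final counting
  have hcard : Fintype.card (G ⧸ G₁) ≤
      ((Finset.univ ×ˢ S).filter fun p => F p = 1).card := by
    rw [← Finset.card_univ]
    apply Finset.card_le_card_of_injOn π
    · intro c _
      exact Finset.mem_filter.2 ⟨Finset.mem_product.2 ⟨Finset.mem_univ _, hπS c⟩, hπtriv c⟩
    · exact fun a _ b _ hab => hπinj hab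
  have hTcard : T.card ≤ ((Finset.univ ×ˢ S).filter fun p => ¬(F p = 1)).card :=
    Finset.card_image_le
  have hsplit : ((Finset.univ ×ˢ S).filter fun p => F p = 1).card +
      ((Finset.univ ×ˢ S).filter fun p => ¬(F p = 1)).card = (Finset.univ ×ˢ S).card :=
    Finset.card_filter_add_card_filter_not _
  have hprod : ((Finset.univ : Finset (G ⧸ G₁)) ×ˢ S).card =
      Fintype.card (G ⧸ G₁) * S.card := by
    rw [Finset.card_product, Finset.card_univ]
  have hindex : G₁.index = Fintype.card (G ⧸ G₁) := by
    rw [Subgroup.index_eq_card, Nat.card_eq_fintype_card]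
  refine ⟨T, ?_, hclosure⟩
  calc T.card + G₁.index
      ≤ ((Finset.univ ×ˢ S).filter fun p => ¬(F p = 1)).card +
        ((Finset.univ ×ˢ S).filter fun p => F p = 1).card :=
        add_le_add hTcard (hindex ▸ hcard)
    _ = (Finset.univ ×ˢ S).card := by rw [add_comm]; exact hsplit
    _ = Fintype.card (G ⧸ G₁) * S.card := hprod
    _ = S.card * G₁.index := by rw [hindex, mul_comm]

end SchreierAux



/-- If a finitely generated residually finite group `G` is not free, then `rk - 1` fails
to be multiplicative: there is a normal subgroup `G₁` of finite index with
`rk(G₁) - 1 < [G : G₁] * (rk(G) - 1)`; in fact `G₁` can be generated by at most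
`(rk(G) - 1) * [G : G₁]` elements. -/
theorem exists_finite_index_subgroup_rank_lt_of_not_free
    (G : Type*) [Group G] [Group.FG G]
    (hres : ∀ g : G, g ≠ 1 → ∃ N : Subgroup G, N.Normal ∧ N.FiniteIndex ∧ g ∉ N)
    (hnotfree : ¬ IsFreeGroup G) :
    ∃ G₁ : Subgroup G, G₁.Normal ∧ G₁.FiniteIndex ∧
      (subgroupRank G₁ : ℤ) - 1 <
        (G₁.index : ℤ) * ((subgroupRank (⊤ : Subgroup G) : ℤ) - 1) ∧
      ∃ S : Finset G, S.card ≤ (subgroupRank (⊤ : Subgroup G) - 1) * G₁.index ∧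
        Subgroup.closure (S : Set G) = G₁ := by
  classical
  -- a generating set of minimal cardinality
  have hne : ∃ n, n ∈ {n : ℕ | ∃ S : Finset G, S.card = n ∧
      Subgroup.closure (S : Set G) = ⊤} := by
    obtain ⟨S, hS⟩ := (Group.FG.out : (⊤ : Subgroup G).FG)
    exact ⟨S.card, S, rfl, hS⟩
  obtain ⟨S₀, hcard, hgen⟩ : ∃ S : Finset G, S.card = subgroupRank (⊤ : Subgroup G) ∧
      Subgroup.closure (S : Set G) = ⊤ := Nat.sInf_mem hne
  set α := {x : G // x ∈ S₀} with hα
  set φ : FreeGroup α →* G := FreeGroup.lift (fun a : α => (a : G)) with hφ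
  have hφsurj : Function.Surjective φ := by
    rw [← MonoidHom.range_eq_top, hφ, FreeGroup.range_lift_eq_closure]
    rw [show Set.range (fun a : α => (a : G)) = (S₀ : Set G) from Subtype.range_coe]
    exact hgen
  -- a nontrivial relation
  have hker : ∃ w : FreeGroup α, w ≠ 1 ∧ φ w = 1 := by
    by_contra hinj
    push_neg at hinj
    have : Function.Injective φ := by
      rw [← MonoidHom.ker_eq_bot_iff, Subgroup.eq_bot_iff_forall]
      intro x hx
      by_contra hx1
      exact (hinj x hx1) hx
    exact hnotfree (IsFreeGroup.ofMulEquiv (MulEquiv.ofBijective φ ⟨this, hφsurj⟩))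
  have hP : ∃ m, ∃ w : FreeGroup α, w ≠ 1 ∧ φ w = 1 ∧ w.toWord.length = m := by
    obtain ⟨w, h1, h2⟩ := hker
    exact ⟨w.toWord.length, w, h1, h2, rfl⟩
  obtain ⟨w, hw1, hwker, hwlen⟩ := Nat.find_spec hP
  have hmin : ∀ v : FreeGroup α, v ≠ 1 → φ v = 1 → w.toWord.length ≤ v.toWord.length := by
    intro v h1 h2
    rw [hwlen]
    exact Nat.find_le ⟨v, h1, h2, rfl⟩
  set L : List (α × Bool) := w.toWord with hL
  set ℓ : ℕ := L.length with hℓ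
  have hLchain : List.Chain' SchreierAux.Rel L := SchreierAux.chain'_toWord w
  have hLne : L ≠ [] := fun h => hw1 (FreeGroup.toWord_eq_nil_iff.1 h)
  have hℓpos : 0 < ℓ := List.length_pos_iff.2 hLne
  -- letters
  set a₀ : α × Bool := L.head hLne with ha₀
  set letter : ℕ → α × Bool := fun i => L.getD i a₀ with hletter
  set sg : ℕ → G := fun i => ((letter i).1 : G) with hsg
  set bg : ℕ → Bool := fun i => (letter i).2 with hbg
  have hget : ∀ i (h : i < ℓ), letter i = L.get ⟨i, h⟩ := fun i h => List.getD_eq_get L a₀ ⟨i, h⟩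
  -- prefixes
  set q : ℕ → G := fun i => φ (FreeGroup.mk (L.take i)) with hq
  have hq0 : q 0 = 1 := by
    simp [hq, ← FreeGroup.one_eq_mk]
  have hqℓ : q ℓ = 1 := by
    rw [hq]
    simp only [hℓ, List.take_length]
    rw [hL, FreeGroup.mk_toWord]
    exact hwker
  have hstep : ∀ i, i < ℓ → q (i + 1) = q i * cond (bg i) (sg i) (sg i)⁻¹ := by
    intro i hi
    have htake : L.take (i + 1) = L.take i ++ [letter i] := by
      rw [List.take_succ, hget i hi]
      simp [List.getElem?_eq_getElem hi, List.get_eq_getElem]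
    rw [hq]
    simp only [htake]
    rw [← FreeGroup.mul_mk, map_mul]
    congr 1
    rw [hφ, FreeGroup.lift_mk]
    rcases hb : (letter i).2 with _ | _ <;>
      simp [hsg, hbg, hb]
  -- distinctness of the proper prefixes
  have hdistinct : ∀ i j, i < j → j ≤ ℓ → ¬(i = 0 ∧ j = ℓ) → q i ≠ q j := by
    intro i j hij hjl hex heq
    set M : List (α × Bool) := (L.take j).drop i with hM
    have hsplit : L.take i ++ M = L.take j := by
      have h := List.take_append_drop i (L.take j)
      rwa [List.take_take, min_eq_left hij.le] at h
    have hMinfix : M <:+: L := ⟨L.take i, L.drop j, by rw [hsplit, List.take_append_drop]⟩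
    have hMchain : List.Chain' SchreierAux.Rel M := hLchain.infix hMinfix
    have hMlen : M.length = j - i := by
      rw [hM, List.length_drop, List.length_take]
      omega
    have hMne : M ≠ [] := by
      intro h
      rw [h] at hMlen
      simp at hMlen
      omega
    have hv1 : FreeGroup.mk M ≠ 1 := SchreierAux.mk_ne_one_of_chain' hMchain hMne
    have hvker : φ (FreeGroup.mk M) = 1 := by
      have h2 : q i * φ (FreeGroup.mk M) = q j := by
        rw [hq]
        simp only
        rw [← map_mul, FreeGroup.mul_mk, hsplit]
      rw [← heq] at h2
      have := mul_left_cancel (a := q i) (b := φ (FreeGroup.mk M)) (c := 1)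
        (by rw [h2, mul_one])
      exact this
    have hlen := hmin _ hv1 hvker
    rw [SchreierAux.toWord_mk_of_chain' hMchain, hMlen] at hlen
    omega
  -- the word is cyclically reduced
  have hcyc : ¬(bg 0 = true ∧ bg (ℓ - 1) = false ∧ sg 0 = sg (ℓ - 1)) := by
    rintro ⟨hb0, hbl, hsl⟩
    have hℓ2 : 2 ≤ ℓ := by
      by_contra h
      have h1 : ℓ = 1 := by omega
      have : bg 0 = false := by
        have := hbl
        rw [h1] at this
        simpa using this
      rw [hb0] at this
      exact Bool.noConfusion this
    set M : List (α × Bool) := (L.take (ℓ - 1)).drop 1 with hM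
    have h1 : L.take 1 ++ M = L.take (ℓ - 1) := by
      have h := List.take_append_drop 1 (L.take (ℓ - 1))
      rwa [List.take_take, min_eq_left (by omega : 1 ≤ ℓ - 1)] at h
    have htake1 : L.take 1 = [letter 0] := by
      rw [show (1 : ℕ) = 0 + 1 from rfl, List.take_succ, hget 0 hℓpos]
      simp [List.getElem?_eq_getElem hℓpos, List.get_eq_getElem]
    have hl1 : ℓ - 1 < ℓ := by omega
    have hdrop : L.drop (ℓ - 1) = [letter (ℓ - 1)] := by
      rw [List.drop_eq_getElem_cons hl1, hget (ℓ - 1) hl1]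
      have : ℓ - 1 + 1 = ℓ := by omega
      rw [this]
      simp [List.get_eq_getElem, hℓ, List.drop_length]
    have hLsplit : [letter 0] ++ M ++ [letter (ℓ - 1)] = L := by
      rw [← htake1, ← hdrop, h1, List.take_append_drop]
    set s : α := (letter 0).1 with hs
    have hself : (letter (ℓ - 1)).1 = s := by
      have : ((letter (ℓ - 1)).1 : G) = ((letter 0).1 : G) := hsl.symm
      exact Subtype.coe_injective this
    have hlet0 : letter 0 = (s, true) := by
      rw [hs]
      exact Prod.ext rfl hb0
    have hletl : letter (ℓ - 1) = (s, false) := by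
      refine Prod.ext ?_ hbl
      exact hself
    have hofinv : FreeGroup.mk [(s, false)] = (FreeGroup.of s)⁻¹ := by
      rw [FreeGroup.of, FreeGroup.inv_mk]
      simp [FreeGroup.invRev]
    have hwsplit : w = FreeGroup.of s * FreeGroup.mk M * (FreeGroup.of s)⁻¹ := by
      rw [← hofinv, FreeGroup.of, FreeGroup.mul_mk, FreeGroup.mul_mk, ← hlet0, ← hletl,
        hLsplit, hL, FreeGroup.mk_toWord]
    by_cases hv : FreeGroup.mk M = 1
    · rw [hv, mul_one] at hwsplit
      simp at hwsplit
      exact hw1 hwsplit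
    · have hvker : φ (FreeGroup.mk M) = 1 := by
        have := hwker
        rw [hwsplit] at this
        group at this
        have h2 : φ (FreeGroup.of s) * φ (FreeGroup.mk M) * (φ (FreeGroup.of s))⁻¹ = 1 := by
          rw [← map_inv, ← map_mul, ← map_mul]
          rw [hwsplit] at hwker
          exact hwker
        calc φ (FreeGroup.mk M)
            = (φ (FreeGroup.of s))⁻¹ * (φ (FreeGroup.of s) * φ (FreeGroup.mk M) *
              (φ (FreeGroup.of s))⁻¹) * φ (FreeGroup.of s) := by group
          _ = 1 := by rw [h2]; group
      have hMinfix : M <:+: L := ⟨[letter 0], [letter (ℓ - 1)], hLsplit⟩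
      have hMchain : List.Chain' SchreierAux.Rel M := hLchain.infix hMinfix
      have hlen := hmin _ hv hvker
      rw [SchreierAux.toWord_mk_of_chain' hMchain] at hlen
      have hMlen : M.length = ℓ - 1 - 1 := by
        rw [hM, List.length_drop, List.length_take]
        omega
      omega
  -- the separating finite-index normal subgroup
  have hsep : ∀ g : G, ∃ N : Subgroup G, N.Normal ∧ N.FiniteIndex ∧ (g ≠ 1 → g ∉ N) := by
    intro g
    by_cases hg : g = 1
    · exact ⟨⊤, inferInstance, inferInstance, fun h => absurd hg h⟩
    · obtain ⟨N, h1, h2, h3⟩ := hres g hg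
      exact ⟨N, h1, h2, fun _ => h3⟩
  choose N hNn hNf hNm using hsep
  set G₁ : Subgroup G := ⨅ p : Fin ℓ × Fin ℓ, N ((q p.1)⁻¹ * q p.2) with hG₁
  haveI hG₁n : G₁.Normal := by
    constructor
    intro x hx g
    rw [hG₁, Subgroup.mem_iInf] at hx ⊢
    intro p
    exact (hNn _).conj_mem _ (hx p) g
  haveI hG₁f : G₁.FiniteIndex := Subgroup.finiteIndex_iInf fun p => hNf _
  have hQdist : ∀ i j, i < ℓ → j < ℓ →
      (QuotientGroup.mk (q i) : G ⧸ G₁) = QuotientGroup.mk (q j) → q i = q j := by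
    intro i j hi hj hquot
    by_contra hne2
    have hmem : (q i)⁻¹ * q j ∈ G₁ := (QuotientGroup.eq).1 hquot
    have hle : G₁ ≤ N ((q i)⁻¹ * q j) := by
      rw [hG₁]
      exact iInf_le _ ((⟨i, hi⟩ : Fin ℓ), (⟨j, hj⟩ : Fin ℓ))
    exact hNm _ (fun h => hne2 (by rwa [inv_mul_eq_one] at h)) (hle hmem)
  have hquniq : ∀ i j, i < ℓ → j < ℓ → q i = q j → i = j := by
    intro i j hi hj heq
    rcases lt_trichotomy i j with h | h | h
    · exact absurd heq (hdistinct i j h hj.le (by omega))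
    · exact h
    · exact absurd heq.symm (hdistinct j i h hi.le (by omega))
  have hquniq2 : ∀ i j, i ≤ ℓ → j ≤ ℓ → q i = q j →
      i = j ∨ (i = 0 ∧ j = ℓ) ∨ (i = ℓ ∧ j = 0) := by
    intro i j hi hj heq
    by_cases hij : i = j
    · exact Or.inl hij
    rcases lt_trichotomy i j with h | h | h
    · by_cases hc : i = 0 ∧ j = ℓ
      · exact Or.inr (Or.inl hc)
      · exact absurd heq (hdistinct i j h hj hc)
    · omega
    · by_cases hc : j = 0 ∧ i = ℓ
      · exact Or.inr (Or.inr ⟨hc.2, hc.1⟩)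
      · exact absurd heq.symm (hdistinct j i h hi hc)
  -- the cycle in the Schreier graph
  set C : Finset G := (Finset.range ℓ).image q with hC
  have hqC : ∀ i, i ≤ ℓ → q i ∈ C := by
    intro i hi
    rcases Nat.lt_or_ge i ℓ with h | h
    · exact Finset.mem_image.2 ⟨i, Finset.mem_range.2 h, rfl⟩
    · have hi' : i = ℓ := by omega
      rw [hi', hqℓ, ← hq0]
      exact Finset.mem_image.2 ⟨0, Finset.mem_range.2 hℓpos, rfl⟩
  have hC1 : (1 : G) ∈ C := by
    rw [← hq0]
    exact hqC 0 (Nat.zero_le ℓ)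
  have hCdist : ∀ x ∈ C, ∀ y ∈ C,
      (QuotientGroup.mk x : G ⧸ G₁) = QuotientGroup.mk y → x = y := by
    intro x hx y hy hxy
    obtain ⟨i, hi, rfl⟩ := Finset.mem_image.1 hx
    obtain ⟨j, hj, rfl⟩ := Finset.mem_image.1 hy
    exact hQdist i j (Finset.mem_range.1 hi) (Finset.mem_range.1 hj) hxy
  -- the injective pair assignment on the cycle
  set ν : G → G × G := fun x =>
    if h : ∃ i, i < ℓ ∧ q i = x then
      (cond (bg h.choose) (q h.choose) (q (h.choose + 1)), sg h.choose)
    else (1, 1) with hν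
  have hνval : ∀ i, i < ℓ →
      ν (q i) = (cond (bg i) (q i) (q (i + 1)), sg i) := by
    intro i hi
    have hex : ∃ k, k < ℓ ∧ q k = q i := ⟨i, hi, rfl⟩
    have hch : hex.choose = i := hquniq _ _ hex.choose_spec.1 hi hex.choose_spec.2
    rw [hν]
    simp only [dif_pos hex, hch]
  have hsgS : ∀ i, sg i ∈ S₀ := fun i => (letter i).1.2
  have hstepb : ∀ i, i < ℓ → bg i = true → q i * sg i = q (i + 1) := by
    intro i hi hb
    rw [hstep i hi, hb, cond_true]
  have hstepb' : ∀ i, i < ℓ → bg i = false → q (i + 1) * sg i = q i := by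
    intro i hi hb
    rw [hstep i hi, hb, cond_false]
    group
  have hνspec : ∀ x ∈ C, (ν x).1 ∈ C ∧ (ν x).2 ∈ S₀ ∧ (ν x).1 * (ν x).2 ∈ C := by
    intro x hx
    obtain ⟨i, hi', rfl⟩ := Finset.mem_image.1 hx
    have hi := Finset.mem_range.1 hi'
    rw [hνval i hi]
    rcases hb : bg i with _ | _
    · refine ⟨?_, hsgS i, ?_⟩ <;> simp only [cond_false]
      · exact hqC (i + 1) (by omega)
      · rw [hstepb' i hi hb]
        exact hqC i hi.le
    · refine ⟨?_, hsgS i, ?_⟩ <;> simp only [cond_true]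
      · exact hqC i hi.le
      · rw [hstepb i hi hb]
        exact hqC (i + 1) (by omega)
  have hblet : ∀ i, (letter i).2 = bg i := fun i => rfl
  have hchainat : ∀ i, i + 1 < ℓ → SchreierAux.Rel (letter i) (letter (i + 1)) := by
    intro i hi
    have h : SchreierAux.Rel (L.get ⟨i, by omega⟩) (L.get ⟨i + 1, by omega⟩) :=
      List.isChain_iff_getElem.1 hLchain i (by omega)
    rwa [← hget i (by omega), ← hget (i + 1) (by omega)] at h
  have hνinj : Set.InjOn ν C := by
    intro x hx y hy he
    obtain ⟨i, hi', rfl⟩ := Finset.mem_image.1 hx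
    obtain ⟨j, hj', rfl⟩ := Finset.mem_image.1 hy
    have hi := Finset.mem_range.1 hi'
    have hj := Finset.mem_range.1 hj'
    rw [hνval i hi, hνval j hj, Prod.mk.injEq] at he
    obtain ⟨he1, he2⟩ := he
    have hletind : (letter i).1 = (letter j).1 := Subtype.coe_injective he2
    suffices h : i = j by rw [h]
    rcases hbi : bg i with _ | _ <;> rcases hbj : bg j with _ | _ <;>
      rw [hbi, hbj] at he1 <;> simp only [cond_false, cond_true] at he1
    · -- both letters negative : q (i+1) = q (j+1)
      have := hquniq2 (i + 1) (j + 1) (by omega) (by omega) he1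
      omega
    · -- letter i negative, letter j positive : q (i+1) = q j
      exfalso
      rcases hquniq2 (i + 1) j (by omega) hj.le he1 with h | ⟨h, _⟩ | ⟨h1, h2⟩
      · refine hchainat i (by omega) ⟨?_, ?_⟩
        · rw [h]
          exact hletind
        · rw [h, hblet i, hblet j, hbi, hbj]
          rfl
      · omega
      · refine hcyc ⟨?_, ?_, ?_⟩
        · rw [← h2]
          exact hbj
        · rw [show ℓ - 1 = i from by omega]
          exact hbi
        · rw [← h2, show ℓ - 1 = i from by omega]
          exact he2.symm
    · -- letter i positive, letter j negative : q i = q (j+1)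
      exfalso
      rcases hquniq2 i (j + 1) hi.le (by omega) he1 with h | ⟨h1, h2⟩ | ⟨h, _⟩
      · refine hchainat j (by omega) ⟨?_, ?_⟩
        · rw [← h]
          exact hletind.symm
        · rw [← h, hblet j, hblet i, hbi, hbj]
          rfl
      · refine hcyc ⟨?_, ?_, ?_⟩
        · rw [← h1]
          exact hbi
        · rw [show ℓ - 1 = j from by omega]
          exact hbj
        · rw [← h1, show ℓ - 1 = j from by omega]
          exact he2
      · omega
    · -- both letters positive : q i = q j
      exact hquniq i j hi hj he1
  -- apply the Schreier-type generation lemma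
  obtain ⟨T, hTcard, hTgen⟩ :=
    SchreierAux.exists_small_generating_finset G₁ S₀ hgen C hC1 hCdist ν hνinj hνspec
  have hrk : subgroupRank G₁ ≤ T.card := Nat.sInf_le ⟨T, rfl, hTgen⟩
  have hkpos : 0 < G₁.index := Nat.pos_of_ne_zero hG₁f.index_ne_zero
  rw [hcard] at hTcard
  refine ⟨G₁, hG₁n, hG₁f, ?_, T, ?_, hTgen⟩
  · have h1 : (T.card : ℤ) + G₁.index ≤ (subgroupRank (⊤ : Subgroup G) : ℤ) * G₁.index := by
      exact_mod_cast hTcard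
    have h2 : (1 : ℤ) ≤ G₁.index := by exact_mod_cast hkpos
    have h3 : (subgroupRank G₁ : ℤ) ≤ T.card := by exact_mod_cast hrk
    have e : (G₁.index : ℤ) * ((subgroupRank (⊤ : Subgroup G) : ℤ) - 1) =
        (subgroupRank (⊤ : Subgroup G) : ℤ) * G₁.index - G₁.index := by ring
    rw [e]
    linarith
  · have e : (subgroupRank (⊤ : Subgroup G) - 1) * G₁.index =
        subgroupRank (⊤ : Subgroup G) * G₁.index - G₁.index := by
      rw [Nat.sub_mul, one_mul]
    rw [e]
    exact Nat.le_sub_of_add_le hTcard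
end
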